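/- arXiv:1112.1929 — 5 statements merged into one kernel-verified Lean document; each statement's English description precedes it below -/
import Mathlib

section
/- Let G be a finite abelian group of odd order and let B, S be subsets of G with |B| = b, 2b ≤ |G|, and |S| = s ≥ 3. Assume that S generates G, that S ∩ (−S) = ∅, and that Ŝ = S ∪ {0} ∪ (−S) has a Vosper-representation, i.e., there exists a subgroup H of G with |Ŝ + H| < min(|G|, |Ŝ| + |H|) such that the image of Ŝ under the canonical map φ : G → G/H is a Vosper subset of G/H. Let t, r, q be integers with 1 ≤ t ≤ |G| − 1, t = r(2s+2) + q and −1 ≤ q ≤ 2s. Then max_{x ∈ S} λ_B(x) ≥ 4(s+1)·b·(t−b+1) / ( t(t+2s+6) + q(2s−q−2) ). -/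
open Finset Pointwise


/-- `lam B x = |(B + x) \ B|`. -/
def lam {G : Type*} [AddCommGroup G] [DecidableEq G] (B : Finset G) (x : G) : ℕ :=
  ((B.image (· + x)) \ B).card

section LamAux
variable {G : Type*} [AddCommGroup G] [DecidableEq G]

lemma mem_image_add {B : Finset G} {x u : G} : u ∈ B.image (· + x) ↔ u - x ∈ B := by
  constructor
  · intro h
    rcases Finset.mem_image.1 h with ⟨v, hv, rfl⟩
    simpa using hv
  · intro h
    exact Finset.mem_image.2 ⟨u - x, h, by abel⟩

lemma lam_zero (B : Finset G) : lam B 0 = 0 := by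
  simp [lam]

lemma lam_card_eq (B : Finset G) (x : G) :
    lam B x + (B.filter (fun u => u - x ∈ B)).card = B.card := by
  have h1 : B.image (· + x) ∩ B = B.filter (fun u => u - x ∈ B) := by
    ext u
    rw [Finset.mem_inter, Finset.mem_filter, mem_image_add, and_comm]
  have h2 := Finset.card_inter_add_card_sdiff (B.image (· + x)) B
  have h3 : (B.image (· + x)).card = B.card :=
    Finset.card_image_of_injective _ (add_left_injective x)
  rw [h1] at h2
  unfold lam
  omega

lemma lam_neg (B : Finset G) (x : G) : lam B (-x) = lam B x := by
  have e1 := lam_card_eq B x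
  have e2 := lam_card_eq B (-x)
  have e3 : (B.filter (fun u => u - (-x) ∈ B)).card = (B.filter (fun u => u - x ∈ B)).card := by
    apply Finset.card_bij' (fun u _ => u + x) (fun u _ => u - x)
    · intro a ha
      rw [Finset.mem_filter] at ha ⊢
      have h' : a - -x = a + x := by abel
      rw [h'] at ha
      refine ⟨ha.2, ?_⟩
      have : a + x - x = a := by abel
      rw [this]; exact ha.1
    · intro a ha
      rw [Finset.mem_filter] at ha ⊢
      refine ⟨ha.2, ?_⟩
      have : a - x - -x = a := by abel
      rw [this]; exact ha.1
    · intro a _; abel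
    · intro a _; abel
  omega

lemma lam_add_le (B : Finset G) (x y : G) : lam B (x + y) ≤ lam B x + lam B y := by
  have hsub : (B.image (· + (x + y))) \ B ⊆
      ((B.image (· + (x + y))) \ (B.image (· + y))) ∪ ((B.image (· + y)) \ B) := by
    intro u hu
    simp only [Finset.mem_sdiff, Finset.mem_union] at hu ⊢
    by_cases h : u ∈ B.image (· + y)
    · exact Or.inr ⟨h, hu.2⟩
    · exact Or.inl ⟨hu.1, h⟩
  have h1 : ((B.image (· + (x + y))) \ (B.image (· + y))).card = lam B x := by
    have himg : (B.image (· + (x + y))) = ((B.image (· + x)).image (· + y)) := by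
      rw [Finset.image_image]
      congr 1
      ext u
      simp [add_assoc]
    have heq : (B.image (· + (x + y))) \ (B.image (· + y))
        = ((B.image (· + x)) \ B).image (· + y) := by
      rw [himg, Finset.image_sdiff _ _ (add_left_injective y)]
    rw [heq, Finset.card_image_of_injective _ (add_left_injective y)]
    rfl
  have h2 := Finset.card_le_card hsub
  have h3 := Finset.card_union_le ((B.image (· + (x + y))) \ (B.image (· + y)))
      ((B.image (· + y)) \ B)
  have h4 : ((B.image (· + y)) \ B).card = lam B y := rfl
  have h5 : ((B.image (· + (x + y))) \ B).card = lam B (x + y) := rfl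
  omega

end LamAux


lemma neg_ne_self_of_odd {Q : Type*} [AddCommGroup Q] [Fintype Q]
    (hodd : Odd (Fintype.card Q)) {a : Q} (ha : a ≠ 0) : -a ≠ a := by
  intro h
  have h2 : (2 : ℕ) • a = 0 := by
    rw [two_nsmul]
    nth_rewrite 1 [← h]
    simp
  have hdvd : addOrderOf a ∣ 2 := addOrderOf_dvd_iff_nsmul_eq_zero.2 h2
  have hcard : addOrderOf a ∣ Fintype.card Q := addOrderOf_dvd_card
  rcases (Nat.dvd_prime Nat.prime_two).1 hdvd with h1 | h1
  · exact ha (AddMonoid.addOrderOf_eq_one_iff.1 h1)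
  · rw [h1] at hcard
    rw [Nat.odd_iff] at hodd
    omega

lemma even_card_symm_aux {Q : Type*} [AddCommGroup Q] [Fintype Q] [DecidableEq Q]
    (hodd : Odd (Fintype.card Q)) :
    ∀ n (A : Finset Q), A.card = n → (∀ a ∈ A, -a ∈ A) → 0 ∉ A → Even A.card := by
  intro n
  induction n using Nat.strong_induction_on with
  | _ n ih =>
    intro A hcard hsym h0
    rcases A.eq_empty_or_nonempty with rfl | ⟨a, ha⟩
    · simp
    · have hna : -a ∈ A := hsym a ha
      have hane : a ≠ 0 := fun h => h0 (h ▸ ha)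
      have hneq : -a ≠ a := neg_ne_self_of_odd hodd hane
      have hsubset : ({a, -a} : Finset Q) ⊆ A := by
        intro z hz
        rcases Finset.mem_insert.1 hz with rfl | hz
        · exact ha
        · rcases Finset.mem_singleton.1 hz with rfl
          exact hna
      have hpaircard : ({a, -a} : Finset Q).card = 2 :=
        Finset.card_pair (Ne.symm hneq)
      have hsd : (A \ {a, -a}).card = A.card - 2 := by
        rw [Finset.card_sdiff_of_subset hsubset, hpaircard]
      have hcard2 : 2 ≤ A.card := hpaircard ▸ Finset.card_le_card hsubset
      have hlt : (A \ {a, -a}).card < n := by omega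
      have hsym' : ∀ b ∈ A \ {a, -a}, -b ∈ A \ {a, -a} := by
        intro b hb
        rw [Finset.mem_sdiff] at hb ⊢
        refine ⟨hsym b hb.1, ?_⟩
        intro hmem
        apply hb.2
        rw [Finset.mem_insert, Finset.mem_singleton] at hmem ⊢
        rcases hmem with h | h
        · right
          rw [← h]; abel
        · left
          rw [← neg_neg b, h]; abel
      have h0' : (0 : Q) ∉ A \ {a, -a} := fun hmem => h0 (Finset.mem_sdiff.1 hmem).1
      have heven := ih _ hlt (A \ {a, -a}) rfl hsym' h0'
      rcases heven with ⟨k, hk⟩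
      exact ⟨k + 1, by omega⟩

lemma even_sdiff_zero_symm {Q : Type*} [AddCommGroup Q] [Fintype Q] [DecidableEq Q]
    (hodd : Odd (Fintype.card Q)) (A : Finset Q) (hsym : ∀ a ∈ A, -a ∈ A) (h0 : (0:Q) ∈ A) :
    Odd A.card := by
  have hs : ∀ a ∈ A \ {0}, -a ∈ A \ {0} := by
    intro a ha
    rw [Finset.mem_sdiff, Finset.mem_singleton] at ha ⊢
    exact ⟨hsym a ha.1, fun h => ha.2 (by rw [← neg_neg a, h]; simp)⟩
  have h0' : (0:Q) ∉ A \ {0} := by simp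
  have heven := even_card_symm_aux hodd _ (A \ {0}) rfl hs h0'
  have hcard : (A \ {0}).card = A.card - 1 := by
    rw [Finset.card_sdiff_of_subset (by simpa using h0)]
    simp
  have hpos : 1 ≤ A.card := Finset.card_pos.2 ⟨0, h0⟩
  rcases heven with ⟨k, hk⟩
  exact ⟨k, by omega⟩


section Quot
variable {G : Type*} [AddCommGroup G] [Fintype G] [DecidableEq G] (H : AddSubgroup G)

lemma ncard_preimage_mk (T : Set (G ⧸ H)) :
    ((QuotientAddGroup.mk ⁻¹' T : Set G)).ncard = Nat.card H * T.ncard := by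
  have h := Nat.card_congr (QuotientAddGroup.preimageMkEquivAddSubgroupProdSet H T)
  rw [Nat.card_prod] at h
  rw [← Nat.card_coe_set_eq, h, ← Nat.card_coe_set_eq]

lemma ncard_fiber_mk (η : G ⧸ H) :
    ((QuotientAddGroup.mk ⁻¹' {η} : Set G)).ncard = Nat.card H := by
  rw [ncard_preimage_mk, Set.ncard_singleton, mul_one]

lemma coset_pigeonhole (U V : Finset G) (ξ η : G ⧸ H)
    (hU : ∀ u ∈ U, (u : G ⧸ H) = ξ) (hV : ∀ v ∈ V, (v : G ⧸ H) = η)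
    (hUV : Nat.card H < U.card + V.card) :
    ∀ w : G, (w : G ⧸ H) = ξ + η → w ∈ U + V := by
  classical
  intro w hw
  set F : Finset G := Finset.univ.filter (fun g => (g : G ⧸ H) = η) with hF
  have hFcard : F.card = Nat.card H := by
    have hcoe : (↑F : Set G) = (QuotientAddGroup.mk ⁻¹' {η} : Set G) := by
      ext g
      simp [hF]
    have := ncard_fiber_mk H η
    rw [← hcoe, Set.ncard_coe_finset] at this
    exact this
  set W : Finset G := U.image (fun u => w - u) with hW
  have hWcard : W.card = U.card := Finset.card_image_of_injective _ sub_right_injective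
  have hWF : W ⊆ F := by
    intro z hz
    rcases Finset.mem_image.1 hz with ⟨u, hu, rfl⟩
    simp only [hF, Finset.mem_filter, Finset.mem_univ, true_and]
    rw [QuotientAddGroup.mk_sub, hw, hU u hu]
    abel
  have hVF : V ⊆ F := by
    intro v hv
    simp only [hF, Finset.mem_filter, Finset.mem_univ, true_and]
    exact hV v hv
  have hunion : (W ∪ V).card ≤ Nat.card H := by
    rw [← hFcard]
    exact Finset.card_le_card (Finset.union_subset hWF hVF)
  have hint := Finset.card_union_add_card_inter W V
  have hne : (W ∩ V).Nonempty := by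
    rw [← Finset.card_pos]
    omega
  rcases hne with ⟨z, hz⟩
  rcases Finset.mem_inter.1 hz with ⟨hzW, hzV⟩
  rcases Finset.mem_image.1 hzW with ⟨u, hu, rfl⟩
  rw [Finset.mem_add]
  exact ⟨u, hu, w - u, hzV, by abel⟩

lemma fiber_translate (δ ξ : G ⧸ H) (a : G) (ha : (a : G ⧸ H) = ξ) :
    (QuotientAddGroup.mk ⁻¹' {δ + ξ} : Set G) =
      (fun g => g + a) '' (QuotientAddGroup.mk ⁻¹' {δ}) := by
  ext w
  simp only [Set.mem_preimage, Set.mem_singleton_iff, Set.mem_image]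
  constructor
  · intro hw
    refine ⟨w - a, ?_, by abel⟩
    rw [QuotientAddGroup.mk_sub, hw, ha]
    abel
  · rintro ⟨g, hg, rfl⟩
    rw [QuotientAddGroup.mk_add, hg, ha]

lemma card_G_eq : Nat.card H * Nat.card (G ⧸ H) = Fintype.card G := by
  have h := AddSubgroup.index_mul_card H
  have h2 : H.index = Nat.card (G ⧸ H) := rfl
  rw [h2] at h
  rw [← Nat.card_eq_fintype_card, ← h]
  ring

end Quot

/-- A subset `X` of a finite abelian group `H` is a Vosper subset of `H` if for every
`Y ⊆ H` with `|Y| ≥ 2` one has `|X + Y| ≥ min (|H| - 1) (|X| + |Y|)`. -/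
def IsVosper {H : Type*} [AddCommGroup H] (X : Set H) : Prop :=
  ∀ Y : Set H, 2 ≤ Y.ncard → min (Nat.card H - 1) (X.ncard + Y.ncard) ≤ (X + Y).ncard

section IterSet
variable {Q : Type*} [AddCommGroup Q]

def iterAddSet (X : Set Q) : ℕ → Set Q
  | 0 => {0}
  | (k+1) => iterAddSet X k + X

lemma iterAddSet_one (X : Set Q) (h0 : (0:Q) ∈ X) : iterAddSet X 1 = X := by
  show ({0} : Set Q) + X = X
  rw [Set.singleton_zero, zero_add]

lemma zero_mem_iterAddSet (X : Set Q) (h0 : (0:Q) ∈ X) : ∀ k, (0:Q) ∈ iterAddSet X k := by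
  intro k
  induction k with
  | zero => exact rfl
  | succ k ih => exact ⟨0, ih, 0, h0, by simp⟩

lemma iterAddSet_subset_succ (X : Set Q) (h0 : (0:Q) ∈ X) (k : ℕ) :
    iterAddSet X k ⊆ iterAddSet X (k+1) := by
  intro a ha
  exact ⟨a, ha, 0, h0, by simp⟩

lemma iterAddSet_mono (X : Set Q) (h0 : (0:Q) ∈ X) {j k : ℕ} (h : j ≤ k) :
    iterAddSet X j ⊆ iterAddSet X k := by
  induction k with
  | zero => simpa [Nat.le_zero.1 h]
  | succ k ih =>
      rcases Nat.lt_or_ge j (k+1) with h' | h'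
      · exact (ih (by omega)).trans (iterAddSet_subset_succ X h0 k)
      · have : j = k + 1 := by omega
        simp [this]

lemma iterAddSet_symm (X : Set Q) (hsym : ∀ x ∈ X, -x ∈ X) :
    ∀ k, ∀ a ∈ iterAddSet X k, -a ∈ iterAddSet X k := by
  intro k
  induction k with
  | zero => intro a ha; rcases ha with rfl; simp; rfl
  | succ k ih =>
      rintro a ⟨b, hb, x, hx, rfl⟩
      exact ⟨-b, ih b hb, -x, hsym x hx, (neg_add b x).symm⟩

end IterSet

section Growth
variable {Q : Type*} [AddCommGroup Q] [Fintype Q]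

lemma odd_ncard_symm (hodd : Odd (Fintype.card Q)) (A : Set Q)
    (hsym : ∀ a ∈ A, -a ∈ A) (h0 : (0:Q) ∈ A) : Odd A.ncard := by
  classical
  have hfin : A.Finite := A.toFinite
  rw [Set.ncard_eq_toFinset_card A hfin]
  apply even_sdiff_zero_symm hodd
  · intro a ha
    rw [Set.Finite.mem_toFinset] at ha ⊢
    exact hsym a ha
  · rw [Set.Finite.mem_toFinset]
    exact h0

lemma vosper_iter_growth (hodd : Odd (Fintype.card Q)) (X : Set Q)
    (h0 : (0:Q) ∈ X) (hsym : ∀ x ∈ X, -x ∈ X) (hl3 : 3 ≤ X.ncard) (hvos : IsVosper X) :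
    ∀ k, min (Nat.card Q) (X.ncard + k * (X.ncard + 1)) ≤ (iterAddSet X (k+1)).ncard := by
  intro k
  induction k with
  | zero =>
      rw [iterAddSet_one X h0]
      simpa using min_le_right _ _
  | succ k ih =>
      set L := iterAddSet X (k+1) with hL
      have hXL : X ⊆ L := by
        rw [← iterAddSet_one X h0]
        exact iterAddSet_mono X h0 (by omega)
      have h2L : 2 ≤ L.ncard := le_trans (by omega) (le_trans hl3
        (Set.ncard_le_ncard hXL L.toFinite))
      have hv := hvos L h2L
      have hcomm : X + L = iterAddSet X (k+2) := by
        show X + L = L + X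
        exact add_comm X L
      rw [hcomm] at hv
      have hoddL : Odd L.ncard :=
        odd_ncard_symm hodd L (iterAddSet_symm X hsym (k+1)) (zero_mem_iterAddSet X h0 (k+1))
      have hoddL2 : Odd (iterAddSet X (k+2)).ncard :=
        odd_ncard_symm hodd _ (iterAddSet_symm X hsym (k+2)) (zero_mem_iterAddSet X h0 (k+2))
      have hoddX : Odd X.ncard := odd_ncard_symm hodd X hsym h0
      have hoddQ : Odd (Nat.card Q) := by rwa [Nat.card_eq_fintype_card]
      have hle : (iterAddSet X (k+2)).ncard ≤ Nat.card Q := by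
        rw [← Set.ncard_univ]
        exact Set.ncard_le_ncard (Set.subset_univ _) (Set.toFinite _)
      show min (Nat.card Q) (X.ncard + (k+1) * (X.ncard + 1)) ≤ (iterAddSet X (k+2)).ncard
      have hexp : (k+1) * (X.ncard + 1) = k * (X.ncard + 1) + X.ncard + 1 := by ring
      rw [Nat.odd_iff] at hoddL hoddL2 hoddX hoddQ
      omega
end Growth

section Fill
variable {G : Type*} [AddCommGroup G] [Fintype G] [DecidableEq G]

def iterAddFin (S : Finset G) : ℕ → Finset G
  | 0 => {0}
  | (k+1) => iterAddFin S k + S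

lemma iterAddFin_one (S : Finset G) : iterAddFin S 1 = S := by
  show ({0} : Finset G) + S = S
  ext a
  simp [Finset.mem_add]

lemma zero_mem_iterAddFin (S : Finset G) (h0 : (0:G) ∈ S) : ∀ k, (0:G) ∈ iterAddFin S k := by
  intro k
  induction k with
  | zero => exact Finset.mem_singleton_self 0
  | succ k ih => exact Finset.mem_add.2 ⟨0, ih, 0, h0, by simp⟩

lemma iterAddFin_subset_succ (S : Finset G) (h0 : (0:G) ∈ S) (k : ℕ) :
    iterAddFin S k ⊆ iterAddFin S (k+1) := by
  intro a ha
  exact Finset.mem_add.2 ⟨a, ha, 0, h0, by simp⟩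

lemma iterAddFin_symm (S : Finset G) (hsym : ∀ a ∈ S, -a ∈ S) :
    ∀ k, ∀ a ∈ iterAddFin S k, -a ∈ iterAddFin S k := by
  intro k
  induction k with
  | zero =>
      intro a ha
      simp only [iterAddFin, Finset.mem_singleton] at ha ⊢
      rw [ha]; simp
  | succ k ih =>
      intro a ha
      rcases Finset.mem_add.1 ha with ⟨b, hb, x, hx, rfl⟩
      exact Finset.mem_add.2 ⟨-b, ih b hb, -x, hsym x hx, by abel⟩

lemma fiber_subset_iterAddFin (hoddG : Odd (Fintype.card G)) (H : AddSubgroup G)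
    (Sh : Finset G) (h0 : (0:G) ∈ Sh) (hsym : ∀ a ∈ Sh, -a ∈ Sh)
    (hdef : Nat.card H * ((QuotientAddGroup.mk '' (↑Sh : Set G) : Set (G ⧸ H))).ncard
      < Sh.card + Nat.card H)
    (hnz : ∃ a ∈ Sh, (a : G ⧸ H) ≠ (0 : G ⧸ H)) :
    ∀ k, ∀ γ ∈ iterAddSet (QuotientAddGroup.mk '' (↑Sh : Set G) : Set (G ⧸ H)) (k+2),
      ∀ w : G, (w : G ⧸ H) = γ → w ∈ iterAddFin Sh (k+2) := by
  classical
  set X : Set (G ⧸ H) := (QuotientAddGroup.mk '' (↑Sh : Set G) : Set (G ⧸ H)) with hX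
  set Xf : Finset (G ⧸ H) := Sh.image (fun a : G => (a : G ⧸ H)) with hXf
  have hcoeXf : (↑Xf : Set (G ⧸ H)) = X := by
    rw [hXf, hX, Finset.coe_image]
  set fibl : G ⧸ H → Finset G := fun ξ => Sh.filter (fun a => (a : G ⧸ H) = ξ) with hfibl
  have hfib_mem : ∀ ξ, ∀ u ∈ fibl ξ, (u : G ⧸ H) = ξ := by
    intro ξ u hu
    exact (Finset.mem_filter.1 hu).2
  have hfib_le : ∀ ξ, (fibl ξ).card ≤ Nat.card H := by
    intro ξ
    have hsub : (↑(fibl ξ) : Set G) ⊆ (QuotientAddGroup.mk ⁻¹' {ξ} : Set G) := by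
      intro u hu
      rw [Finset.mem_coe, Finset.mem_filter] at hu
      exact hu.2
    have := Set.ncard_le_ncard hsub (Set.toFinite _)
    rwa [Set.ncard_coe_finset, ncard_fiber_mk H ξ] at this
  have hsum : ∑ ξ ∈ Xf, (fibl ξ).card = Sh.card := by
    rw [hfibl, hXf]
    exact (Finset.card_eq_sum_card_fiberwise
      (f := fun a : G => (a : G ⧸ H)) (s := Sh)
      (t := Sh.image (fun a : G => (a : G ⧸ H)))
      (fun a ha => Finset.mem_image_of_mem _ ha)).symm
  have hXfcard : Xf.card = X.ncard := by
    rw [← hcoeXf, Set.ncard_coe_finset]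
  have hpair : ∀ ξ ∈ Xf, ∀ η ∈ Xf, ξ ≠ η →
      Nat.card H < (fibl ξ).card + (fibl η).card := by
    intro ξ hξ η hη hne
    have hsubpair : ({ξ, η} : Finset (G ⧸ H)) ⊆ Xf := by
      intro z hz
      rcases Finset.mem_insert.1 hz with rfl | hz
      · exact hξ
      · rw [Finset.mem_singleton] at hz
        rw [hz]; exact hη
    have hsplit : ∑ ζ ∈ Xf \ {ξ, η}, (fibl ζ).card + ∑ ζ ∈ ({ξ, η} : Finset (G ⧸ H)), (fibl ζ).card
        = ∑ ζ ∈ Xf, (fibl ζ).card := Finset.sum_sdiff hsubpair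
    have hpairsum : ∑ ζ ∈ ({ξ, η} : Finset (G ⧸ H)), (fibl ζ).card
        = (fibl ξ).card + (fibl η).card := Finset.sum_pair hne
    have hrest : ∑ ζ ∈ Xf \ {ξ, η}, (fibl ζ).card ≤ (Xf \ ({ξ, η} : Finset (G ⧸ H))).card * Nat.card H := by
      have h' := Finset.sum_le_card_nsmul (Xf \ {ξ, η}) (fun ζ => (fibl ζ).card) (Nat.card H)
        (fun ζ _ => hfib_le ζ)
      simpa [smul_eq_mul] using h'
    have hsd : (Xf \ ({ξ, η} : Finset (G ⧸ H))).card = Xf.card - 2 := by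
      rw [Finset.card_sdiff_of_subset hsubpair, Finset.card_pair hne]
    have h2 : 2 ≤ Xf.card := by
      have := Finset.card_le_card hsubpair
      rwa [Finset.card_pair hne] at this
    have hmul : Nat.card H * Xf.card = (Xf.card - 2) * Nat.card H + 2 * Nat.card H := by
      rw [← Nat.add_mul]
      have he : Xf.card - 2 + 2 = Xf.card := by omega
      rw [he, Nat.mul_comm]
    have hdef' : Nat.card H * Xf.card < Sh.card + Nat.card H := by
      rw [hXfcard]; exact hdef
    rw [hsd] at hrest
    omega
  have hnegfib : ∀ ξ, (fibl (-ξ)).card = (fibl ξ).card := by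
    intro ξ
    have himg : fibl (-ξ) = (fibl ξ).image (fun a => -a) := by
      ext b
      rw [Finset.mem_filter, Finset.mem_image]
      constructor
      · intro ⟨hb1, hb2⟩
        refine ⟨-b, Finset.mem_filter.2 ⟨hsym b hb1, ?_⟩, by simp⟩
        rw [QuotientAddGroup.mk_neg, hb2, neg_neg]
      · rintro ⟨a, ha, rfl⟩
        rcases Finset.mem_filter.1 ha with ⟨ha1, ha2⟩
        refine ⟨hsym a ha1, ?_⟩
        rw [QuotientAddGroup.mk_neg, ha2]
    rw [himg, Finset.card_image_of_injective _ neg_injective]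
  have hXsymm : ∀ ξ ∈ Xf, -ξ ∈ Xf := by
    intro ξ hξ
    rcases Finset.mem_image.1 hξ with ⟨a, ha, rfl⟩
    refine Finset.mem_image.2 ⟨-a, hsym a ha, ?_⟩
    rw [QuotientAddGroup.mk_neg]
  letI : Fintype (G ⧸ H) := Fintype.ofFinite _
  have hoddQ : Odd (Fintype.card (G ⧸ H)) := by
    have hcard := card_G_eq H
    have h1 : Odd (Nat.card ↥H * Nat.card (G ⧸ H)) := by rw [hcard]; exact hoddG
    have h2 := (Nat.odd_mul.1 h1).2
    rwa [Nat.card_eq_fintype_card] at h2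

  -- base case helper: finding a good pair
  have hgood : ∀ ξ ∈ Xf, ∀ η ∈ Xf, ∃ ξ' ∈ Xf, ∃ η' ∈ Xf,
      ξ' + η' = ξ + η ∧ Nat.card H < (fibl ξ').card + (fibl η').card := by
    intro ξ hξ η hη
    by_cases hne : ξ = η
    · subst hne
      by_cases h0ξ : ξ = 0
      · subst h0ξ
        rcases hnz with ⟨a, ha, hanz⟩
        have haX : (a : G ⧸ H) ∈ Xf := Finset.mem_image_of_mem _ ha
        have hnaX : -(a : G ⧸ H) ∈ Xf := hXsymm _ haX
        have hne2 : (a : G ⧸ H) ≠ -(a : G ⧸ H) :=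
          fun h => hanz (by simpa using (neg_ne_self_of_odd hoddQ hanz (h.symm)).elim)
        exact ⟨(a : G ⧸ H), haX, -(a : G ⧸ H), hnaX, by abel,
          hpair _ haX _ hnaX hne2⟩
      · have hnξ : -ξ ∈ Xf := hXsymm _ hξ
        have hne2 : ξ ≠ -ξ := fun h => h0ξ (by
          have := neg_ne_self_of_odd hoddQ h0ξ
          exact absurd h.symm this)
        have := hpair _ hξ _ hnξ hne2
        rw [hnegfib ξ] at this
        exact ⟨ξ, hξ, ξ, hξ, rfl, this⟩
    · exact ⟨ξ, hξ, η, hη, rfl, hpair _ hξ _ hη hne⟩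
  intro k
  induction k with
  | zero =>
      intro γ hγ w hw
      have h0X : (0 : G ⧸ H) ∈ X := ⟨0, by simpa using h0, by simp⟩
      have hγ' : γ ∈ X + X := by
        have heq2 : iterAddSet X 2 = iterAddSet X 1 + X := rfl
        rw [heq2, iterAddSet_one X h0X] at hγ
        exact hγ
      rcases hγ' with ⟨ξ0, hξ0, η0, hη0, hsum0⟩
      have hξ0' : ξ0 ∈ Xf := by rw [← Finset.mem_coe, hcoeXf]; exact hξ0
      have hη0' : η0 ∈ Xf := by rw [← Finset.mem_coe, hcoeXf]; exact hη0
      rcases hgood ξ0 hξ0' η0 hη0' with ⟨ξ', hξ', η', hη', heq, hlt⟩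
      have hw' : (w : G ⧸ H) = ξ' + η' := by rw [hw, ← hsum0, heq]
      have hmem := coset_pigeonhole H (fibl ξ') (fibl η') ξ' η'
        (hfib_mem ξ') (hfib_mem η') hlt w hw'
      have hsub2 : fibl ξ' + fibl η' ⊆ iterAddFin Sh 2 := by
        have h1 : iterAddFin Sh 2 = iterAddFin Sh 1 + Sh := rfl
        rw [h1, iterAddFin_one]
        exact Finset.add_subset_add (Finset.filter_subset _ _) (Finset.filter_subset _ _)
      exact hsub2 hmem
  | succ k ih =>
      intro γ hγ w hw
      have hγ' : γ ∈ iterAddSet X (k+2) + X := hγ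
      rcases hγ' with ⟨δ, hδ, ξ, hξ, hsum0⟩
      rcases hξ with ⟨a, ha, rfl⟩
      have hsum0' : δ + (a : G ⧸ H) = γ := hsum0
      have hwa : ((w - a : G) : G ⧸ H) = δ := by
        rw [QuotientAddGroup.mk_sub, hw, ← hsum0']
        exact add_sub_cancel_right δ _
      have hmem := ih δ hδ (w - a) hwa
      have : w = (w - a) + a := by abel
      rw [this]
      exact Finset.mem_add.2 ⟨w - a, hmem, a, (by exact_mod_cast ha), rfl⟩
end Fill

lemma sum_range_lin (m c : ℤ) : ∀ n : ℕ,
    2 * (∑ k ∈ Finset.range n, (c - ((k:ℤ)+1) * m)) = 2*(n:ℤ)*c - m*(n:ℤ)*((n:ℤ)+1)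
  | 0 => by simp
  | (n+1) => by
      rw [Finset.sum_range_succ, mul_add, sum_range_lin m c n]
      push_cast
      ring

lemma zid (T R Q S M A D : ℤ) (h1 : T = R*M+Q) (h2 : M = 2*S+2)
    (h3 : 2*A = 2*R*(T+2) - M*R*(R+1)) (h4 : D = T + A) :
    T*(T+2*S+6)+Q*(2*S-Q-2) = 2*M*D := by
  subst h4 h1 h2
  linear_combination (-(2*S+2))*h3

set_option maxHeartbeats 2000000 in
theorem stmt_8 {G : Type*} [AddCommGroup G] [Fintype G] [DecidableEq G]
    (hodd : Odd (Fintype.card G))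
    (B S : Finset G) (b s : ℕ)
    (hb : B.card = b) (hbG : 2 * b ≤ Fintype.card G)
    (hs : S.card = s) (hs3 : 3 ≤ s)
    (hgen : AddSubgroup.closure (S : Set G) = ⊤)
    (hdisj : S ∩ S.image (fun x => -x) = ∅)
    (hV : ∃ H : AddSubgroup G,
      ((↑(S ∪ {0} ∪ S.image (fun x => -x)) : Set G) + (H : Set G)).ncard <
        min (Fintype.card G) ((S ∪ {0} ∪ S.image (fun x => -x)).card + Nat.card H) ∧
      IsVosper ((QuotientAddGroup.mk' H) '' (↑(S ∪ {0} ∪ S.image (fun x => -x)) : Set G)))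
    (t r q : ℤ) (ht1 : 1 ≤ t) (ht2 : t ≤ (Fintype.card G : ℤ) - 1)
    (htrq : t = r * (2 * (s : ℤ) + 2) + q) (hq1 : -1 ≤ q) (hq2 : q ≤ 2 * (s : ℤ)) :
    ∃ x ∈ S,
      4 * ((s : ℚ) + 1) * (b : ℚ) * ((t : ℚ) - (b : ℚ) + 1) /
          ((t : ℚ) * ((t : ℚ) + 2 * (s : ℚ) + 6) + (q : ℚ) * (2 * (s : ℚ) - (q : ℚ) - 2))
        ≤ (lam B x : ℚ) := by
  classical
  set Sh : Finset G := S ∪ {0} ∪ S.image (fun x => -x) with hSh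
  -- 0 is not in S
  have h0S : (0:G) ∉ S := by
    intro h
    have h2 : (0:G) ∈ S ∩ S.image (fun x => -x) :=
      Finset.mem_inter.2 ⟨h, Finset.mem_image.2 ⟨0, h, by simp⟩⟩
    rw [hdisj] at h2
    exact absurd h2 (Finset.notMem_empty 0)
  have h0Sh : (0:G) ∈ Sh := by
    rw [hSh]
    exact Finset.mem_union_left _ (Finset.mem_union_right _ (Finset.mem_singleton_self 0))
  have hShsym : ∀ a ∈ Sh, -a ∈ Sh := by
    intro a ha
    rw [hSh, Finset.mem_union, Finset.mem_union] at ha ⊢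
    rcases ha with (ha | ha) | ha
    · exact Or.inr (Finset.mem_image.2 ⟨a, ha, rfl⟩)
    · rw [Finset.mem_singleton] at ha
      subst ha
      left; right
      simp
    · rcases Finset.mem_image.1 ha with ⟨x, hx, rfl⟩
      rw [neg_neg]
      exact Or.inl (Or.inl hx)
  have hShcard : Sh.card = 2*s+1 := by
    have hd1 : Disjoint S ({0} : Finset G) := by
      rw [Finset.disjoint_singleton_right]
      exact h0S
    have h0img : (0:G) ∉ S.image (fun x => -x) := by
      intro h
      rcases Finset.mem_image.1 h with ⟨x, hx, hx0⟩
      have : x = 0 := by simpa using hx0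
      exact h0S (this ▸ hx)
    have hd2 : Disjoint (S ∪ {0}) (S.image (fun x => -x)) := by
      rw [Finset.disjoint_union_left]
      constructor
      · rw [Finset.disjoint_left]
        intro a haS haI
        have : a ∈ S ∩ S.image (fun x => -x) := Finset.mem_inter.2 ⟨haS, haI⟩
        rw [hdisj] at this
        exact absurd this (Finset.notMem_empty a)
      · rw [Finset.disjoint_singleton_left]
        exact h0img
    rw [hSh, Finset.card_union_of_disjoint hd2, Finset.card_union_of_disjoint hd1,
      Finset.card_image_of_injective _ neg_injective, hs, Finset.card_singleton]
    ring
  -- the maximizer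
  have hSne : S.Nonempty := by
    rw [← Finset.card_pos, hs]; omega
  obtain ⟨x₀, hx₀S, hx₀max⟩ := Finset.exists_max_image S (lam B) hSne
  refine ⟨x₀, hx₀S, ?_⟩
  set lmax := lam B x₀ with hlmax
  have hlamSh : ∀ a ∈ Sh, lam B a ≤ lmax := by
    intro a ha
    rw [hSh, Finset.mem_union, Finset.mem_union] at ha
    rcases ha with (ha | ha) | ha
    · exact hx₀max a ha
    · rw [Finset.mem_singleton] at ha
      rw [ha, lam_zero]
      omega
    · rcases Finset.mem_image.1 ha with ⟨x, hx, rfl⟩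
      rw [lam_neg]
      exact hx₀max x hx
  set P : ℕ → Finset G := iterAddFin Sh with hP
  have hPmono : ∀ k, P k ⊆ P (k+1) := fun k => iterAddFin_subset_succ Sh h0Sh k
  have hlamP : ∀ k, ∀ g ∈ P k, lam B g ≤ k * lmax := by
    intro k
    induction k with
    | zero =>
        intro g hg
        have : g = 0 := by
          have : g ∈ ({0} : Finset G) := hg
          simpa using this
        rw [this, lam_zero]
        omega
    | succ k ih =>
        intro g hg
        rcases Finset.mem_add.1 hg with ⟨p, hp, x, hx, rfl⟩
        calc lam B (p + x) ≤ lam B p + lam B x := lam_add_le B p x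
          _ ≤ k * lmax + lmax := Nat.add_le_add (ih p hp) (hlamSh x hx)
          _ = (k+1) * lmax := by ring
  -- ====== growth ======
  obtain ⟨H, hdefH, hvosH⟩ := hV
  set X : Set (G ⧸ H) := QuotientAddGroup.mk '' (↑Sh : Set G) with hX
  have hvos : IsVosper X := hvosH
  have h0X : (0 : G ⧸ H) ∈ X := ⟨0, by simpa using h0Sh, by simp⟩
  have hXsym : ∀ ξ ∈ X, -ξ ∈ X := by
    rintro ξ ⟨a, ha, rfl⟩
    exact ⟨-a, by simpa using hShsym a (by simpa using ha), QuotientAddGroup.mk_neg H a⟩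
  have hcoset : (↑Sh + (H : Set G) : Set G) = QuotientAddGroup.mk ⁻¹' X := by
    ext g
    constructor
    · rintro ⟨a, ha, h', hh', rfl⟩
      show ((a + h' : G) : G ⧸ H) ∈ X
      have : ((a + h' : G) : G ⧸ H) = (a : G ⧸ H) := by
        rw [QuotientAddGroup.mk_add]
        rw [(QuotientAddGroup.eq_zero_iff h').2 hh']
        abel
      rw [this]
      exact ⟨a, ha, rfl⟩
    · rintro hg
      rcases hg with ⟨a, ha, haeq⟩
      refine ⟨a, ha, g - a, ?_, by show a + (g - a) = g; abel⟩
      have : ((g - a : G) : G ⧸ H) = 0 := by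
        rw [QuotientAddGroup.mk_sub, ← haeq]
        abel
      exact (QuotientAddGroup.eq_zero_iff _).1 this
  have hdefnum : Nat.card H * X.ncard < min (Fintype.card G) (2*s+1 + Nat.card H) := by
    have := hdefH
    rw [hcoset, ncard_preimage_mk, hShcard] at this
    exact this
  have hd1 : Nat.card H * X.ncard < Fintype.card G := lt_of_lt_of_le hdefnum (min_le_left _ _)
  have hd2 : Nat.card H * X.ncard < 2*s+1 + Nat.card H :=
    lt_of_lt_of_le hdefnum (min_le_right _ _)
  have hH1 : 1 ≤ Nat.card H := Nat.one_le_iff_ne_zero.2 (Nat.card_ne_zero.2 ⟨⟨0, H.zero_mem⟩, by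
    exact Finite.of_fintype _⟩)
  have hShsub : (↑Sh : Set G) ⊆ QuotientAddGroup.mk ⁻¹' X := by
    intro a ha
    exact ⟨a, ha, rfl⟩
  have hlower : 2*s+1 ≤ Nat.card H * X.ncard := by
    have := Set.ncard_le_ncard hShsub (Set.toFinite _)
    rwa [Set.ncard_coe_finset, hShcard, ncard_preimage_mk] at this
  have hnz : ∃ a ∈ Sh, (a : G ⧸ H) ≠ (0 : G ⧸ H) := by
    by_contra hcon
    push_neg at hcon
    have hsub : (S : Set G) ⊆ (H : Set G) := by
      intro a ha
      have haSh : a ∈ Sh := by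
        rw [hSh]
        exact Finset.mem_union_left _ (Finset.mem_union_left _ (by exact_mod_cast ha))
      exact (QuotientAddGroup.eq_zero_iff a).1 (hcon a haSh)
    have htop : H = ⊤ := top_le_iff.1 (hgen ▸ (AddSubgroup.closure_le H).2 hsub)
    have hcard : Nat.card H = Fintype.card G := by
      rw [htop, ← Nat.card_eq_fintype_card]
      exact Nat.card_congr AddSubgroup.topEquiv.toEquiv
    have hX1 : 1 ≤ X.ncard := by
      have := (Set.ncard_pos (Set.toFinite _)).2 ⟨0, h0X⟩
      omega
    have : Fintype.card G ≤ Nat.card H * X.ncard := by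
      calc Fintype.card G = Nat.card H * 1 := by rw [hcard, mul_one]
        _ ≤ Nat.card H * X.ncard := Nat.mul_le_mul_left _ hX1
    omega
  letI : Fintype (G ⧸ H) := Fintype.ofFinite _
  have hoddQ : Odd (Fintype.card (G ⧸ H)) := by
    have hcard := card_G_eq H
    have h1 : Odd (Nat.card ↥H * Nat.card (G ⧸ H)) := by rw [hcard]; exact hodd
    have h2 := (Nat.odd_mul.1 h1).2
    rwa [Nat.card_eq_fintype_card] at h2
  have hl3 : 3 ≤ X.ncard := by
    rcases hnz with ⟨a, ha, hane⟩
    have hpair : ({(0 : G ⧸ H), (a : G ⧸ H)} : Set (G ⧸ H)) ⊆ X := by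
      intro ξ hξ
      rcases hξ with hξ | hξ
      · rw [hξ]; exact h0X
      · rw [hξ]; exact ⟨a, by simpa using ha, rfl⟩
    have h2 : 2 ≤ X.ncard := by
      have hp := Set.ncard_le_ncard hpair (Set.toFinite _)
      rwa [Set.ncard_pair (Ne.symm hane)] at hp
    have hoddX : Odd X.ncard := odd_ncard_symm hoddQ X hXsym h0X
    rw [Nat.odd_iff] at hoddX
    omega
  have hgrowQ := vosper_iter_growth hoddQ X h0X hXsym hl3 hvos
  -- growth in G
  set m : ℕ := 2*s+2 with hm
  have hgrow : ∀ k, min (Fintype.card G) ((k+1) * m - 1) ≤ (P (k+1)).card := by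
    intro k
    cases k with
    | zero =>
        have h1 : P 1 = Sh := iterAddFin_one Sh
        rw [h1, hShcard]
        have : 1 * m - 1 = 2*s+1 := by rw [hm]; omega
        rw [this]
        exact min_le_right _ _
    | succ k =>
        have hfib := fiber_subset_iterAddFin hodd H Sh h0Sh hShsym (by rw [← hX]; omega) hnz k
        have hpre : QuotientAddGroup.mk ⁻¹' (iterAddSet X (k+2)) ⊆ (↑(P (k+2)) : Set G) := by
          intro w hw
          exact hfib ((w : G ⧸ H)) hw w rfl
        have hcard1 : Nat.card H * (iterAddSet X (k+2)).ncard ≤ (P (k+2)).card := by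
          have := Set.ncard_le_ncard hpre (Set.toFinite _)
          rwa [ncard_preimage_mk, Set.ncard_coe_finset] at this
        have hq := hgrowQ (k+1)
        rcases le_or_gt (Nat.card (G ⧸ H)) (X.ncard + (k+1) * (X.ncard + 1)) with hc | hc
        · have h1 : Nat.card (G ⧸ H) ≤ (iterAddSet X (k+2)).ncard := by
            rw [min_eq_left hc] at hq
            exact hq
          have h2 : Fintype.card G ≤ (P (k+2)).card := by
            calc Fintype.card G = Nat.card H * Nat.card (G ⧸ H) := (card_G_eq H).symm
              _ ≤ Nat.card H * (iterAddSet X (k+2)).ncard := Nat.mul_le_mul_left _ h1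
              _ ≤ (P (k+2)).card := hcard1
          exact le_trans (min_le_left _ _) h2
        · have h1 : X.ncard + (k+1) * (X.ncard + 1) ≤ (iterAddSet X (k+2)).ncard := by
            rw [min_eq_right (le_of_lt hc)] at hq
            exact hq
          have h2 : (2*s+1) + (k+1) * m ≤ (P (k+2)).card := by
            have e1 : Nat.card H * (X.ncard + (k+1) * (X.ncard + 1))
                = Nat.card H * X.ncard + (k+1) * (Nat.card H * X.ncard + Nat.card H) := by
              ring
            calc (2*s+1) + (k+1) * m
                ≤ Nat.card H * X.ncard + (k+1) * (Nat.card H * X.ncard + Nat.card H) := by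
                  apply Nat.add_le_add hlower
                  apply Nat.mul_le_mul_left
                  rw [hm]; omega
              _ = Nat.card H * (X.ncard + (k+1) * (X.ncard + 1)) := e1.symm
              _ ≤ Nat.card H * (iterAddSet X (k+2)).ncard := Nat.mul_le_mul_left _ h1
              _ ≤ (P (k+2)).card := hcard1
          have h3 : (k+2) * m - 1 ≤ (2*s+1) + (k+1) * m := by
            have : (k+2) * m = (k+1) * m + m := by ring
            rw [this, hm]
            omega
          exact le_trans (min_le_right _ _) (le_trans h3 h2)

  -- ====== integer versions ======
  set tn : ℕ := t.toNat with htn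
  have htz : (tn : ℤ) = t := Int.toNat_of_nonneg (by omega)
  have hr0 : 0 ≤ r := by
    by_contra hneg
    push_neg at hneg
    have hrle : r ≤ -1 := by omega
    have hsz : (0:ℤ) ≤ (s:ℤ) := by positivity
    nlinarith [htrq, ht1, hq2]
  set rn : ℕ := r.toNat with hrn
  have hrz : (rn : ℤ) = r := Int.toNat_of_nonneg hr0
  have hmz : ((m : ℕ) : ℤ) = 2*(s:ℤ)+2 := by rw [hm]; push_cast; ring
  have ht' : (tn:ℤ) = (rn:ℤ)*((m:ℕ):ℤ) + q := by rw [htz, hrz, hmz]; exact htrq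
  have htG : tn + 1 ≤ Fintype.card G := by omega
  have htn1 : 1 ≤ tn := by omega
  -- ====== the radius K ======
  have hKex : ∃ k, tn + 1 ≤ (P k).card := by
    set n0 := Fintype.card G with hn0
    have hn01 : 1 ≤ n0 := Fintype.card_pos
    refine ⟨n0, ?_⟩
    have h1 := hgrow (n0 - 1)
    have he : (n0 - 1) + 1 = n0 := by omega
    rw [he] at h1
    have h2 : n0 * 2 ≤ n0 * m := Nat.mul_le_mul_left _ (by omega)
    have h3 : tn + 1 ≤ min n0 (n0 * m - 1) := Nat.le_min.2 ⟨htG, by omega⟩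
    exact le_trans h3 h1
  set K := Nat.find hKex with hKdef
  have hKspec : tn + 1 ≤ (P K).card := Nat.find_spec hKex
  have hKmin : ∀ k, k < K → (P k).card ≤ tn := by
    intro k hk
    have := Nat.find_min hKex hk
    omega
  have hP0card : (P 0).card = 1 := by
    show (iterAddFin Sh 0).card = 1
    simp [iterAddFin]
  have hK1 : 1 ≤ K := by
    by_contra hcon
    have hK0 : K = 0 := by omega
    rw [hK0, hP0card] at hKspec
    omega
  have hKler : K ≤ rn + 1 := by
    apply Nat.find_le
    have h1 := hgrow rn
    have hcast : ((rn * m : ℕ) : ℤ) = (rn:ℤ)*((m:ℕ):ℤ) := by push_cast; ring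
    have hqm : q + 2 ≤ ((m:ℕ):ℤ) := by rw [hmz]; omega
    have h2 : tn + 1 ≤ (rn+1) * m - 1 := by
      have hexp : (rn+1)*m = rn*m + m := by ring
      omega
    exact le_trans (Nat.le_min.2 ⟨htG, h2⟩) h1
  obtain ⟨K', hK'⟩ : ∃ K', K = K' + 1 := ⟨K - 1, by omega⟩
  have hsubK : P K' ⊆ P K := by rw [hK']; exact hPmono K'
  have hNK'le : (P K').card ≤ tn := hKmin K' (by omega)
  have hcardsd : (tn + 1) - (P K').card ≤ (P K \ P K').card := by
    rw [Finset.card_sdiff_of_subset hsubK]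
    have := Finset.card_le_card hsubK
    omega
  obtain ⟨E, hEsub, hEcard⟩ := Finset.exists_subset_card_eq hcardsd
  set T : Finset G := P K' ∪ E with hT
  have hdisjT : Disjoint (P K') E := by
    rw [Finset.disjoint_left]
    intro a ha haE
    exact (Finset.mem_sdiff.1 (hEsub haE)).2 ha
  have hTcard : T.card = tn + 1 := by
    rw [hT, Finset.card_union_of_disjoint hdisjT, hEcard]
    omega
  -- ====== sums ======
  set N : ℕ → ℤ := fun k => ((P k).card : ℤ) with hN
  set L : ℤ := (lmax : ℤ) with hL
  have hL0 : 0 ≤ L := by positivity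
  have hsumP : ∀ j, (∑ g ∈ P j, (lam B g : ℤ)) + L * (∑ k ∈ Finset.range j, N k)
      ≤ L * (j:ℤ) * N j := by
    intro j
    induction j with
    | zero =>
        have h1 : ∑ g ∈ P 0, (lam B g : ℤ) = 0 := by
          show ∑ g ∈ iterAddFin Sh 0, (lam B g : ℤ) = 0
          simp [iterAddFin, lam_zero]
        rw [h1]
        simp
    | succ j ih =>
        have hsplit : ∑ g ∈ P (j+1) \ P j, (lam B g : ℤ) + ∑ g ∈ P j, (lam B g : ℤ)
            = ∑ g ∈ P (j+1), (lam B g : ℤ) := Finset.sum_sdiff (hPmono j)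
        have hboundN : ∑ g ∈ P (j+1) \ P j, lam B g ≤ (P (j+1) \ P j).card * ((j+1) * lmax) := by
          have := Finset.sum_le_card_nsmul (P (j+1) \ P j) (lam B) ((j+1) * lmax)
            (fun g hg => hlamP (j+1) g (Finset.mem_sdiff.1 hg).1)
          simpa [smul_eq_mul] using this
        have hbound : ∑ g ∈ P (j+1) \ P j, (lam B g : ℤ)
            ≤ (N (j+1) - N j) * (((j:ℤ)+1) * L) := by
          have hc : ((P (j+1) \ P j).card : ℤ) = N (j+1) - N j := by
            rw [Finset.card_sdiff_of_subset (hPmono j)]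
            have := Finset.card_le_card (hPmono j)
            rw [hN]
            push_cast [this]
            ring
          calc ∑ g ∈ P (j+1) \ P j, (lam B g : ℤ)
              = ((∑ g ∈ P (j+1) \ P j, lam B g : ℕ) : ℤ) := by push_cast; rfl
            _ ≤ (((P (j+1) \ P j).card * ((j+1) * lmax) : ℕ) : ℤ) := by exact_mod_cast hboundN
            _ = (N (j+1) - N j) * (((j:ℤ)+1) * L) := by rw [← hc]; push_cast; ring
        have hrs : ∑ k ∈ Finset.range (j+1), N k = ∑ k ∈ Finset.range j, N k + N j :=
          Finset.sum_range_succ N j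
        have hkey : (N (j+1) - N j) * (((j:ℤ)+1) * L) + L * (j:ℤ) * N j + L * N j
            = L * ((j:ℤ)+1) * N (j+1) := by ring
        have hcast : (((j:ℕ)+1 : ℕ):ℤ) = (j:ℤ)+1 := by push_cast; ring
        calc ∑ g ∈ P (j+1), (lam B g : ℤ) + L * ∑ k ∈ Finset.range (j+1), N k
            = (∑ g ∈ P (j+1) \ P j, (lam B g : ℤ))
              + (∑ g ∈ P j, (lam B g : ℤ) + L * ∑ k ∈ Finset.range j, N k) + L * N j := by
              rw [← hsplit, hrs]; ring
          _ ≤ (N (j+1) - N j) * (((j:ℤ)+1) * L) + L * (j:ℤ) * N j + L * N j := by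
              have := add_le_add hbound ih
              linarith
          _ = L * ((j:ℤ)+1) * N (j+1) := hkey
          _ = L * (((j+1:ℕ)):ℤ) * N (j+1) := by rw [hcast]
  -- upper bound for the T-sum
  have hTup : (∑ g ∈ T, (lam B g : ℤ)) + L * (∑ k ∈ Finset.range K, N k)
      ≤ L * (K:ℤ) * ((tn:ℤ)+1) := by
    have hTsplit : ∑ g ∈ T, (lam B g : ℤ)
        = ∑ g ∈ P K', (lam B g : ℤ) + ∑ g ∈ E, (lam B g : ℤ) := by
      rw [hT]
      exact Finset.sum_union hdisjT
    have hEboundN : ∑ g ∈ E, lam B g ≤ E.card * (K * lmax) := by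
      have := Finset.sum_le_card_nsmul E (lam B) (K * lmax)
        (fun g hg => hlamP K g (Finset.mem_sdiff.1 (hEsub hg)).1)
      simpa [smul_eq_mul] using this
    have hEbound : ∑ g ∈ E, (lam B g : ℤ) ≤ ((tn:ℤ) + 1 - N K') * ((K:ℤ) * L) := by
      have hc : (E.card : ℤ) = (tn:ℤ) + 1 - N K' := by
        have hNK : N K' = ((P K').card : ℤ) := rfl
        rw [hEcard, hNK]
        omega
      calc ∑ g ∈ E, (lam B g : ℤ) = ((∑ g ∈ E, lam B g : ℕ) : ℤ) := by push_cast; rfl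
        _ ≤ ((E.card * (K * lmax) : ℕ) : ℤ) := by exact_mod_cast hEboundN
        _ = ((tn:ℤ) + 1 - N K') * ((K:ℤ) * L) := by rw [← hc]; push_cast; ring
    have hrs : ∑ k ∈ Finset.range K, N k = ∑ k ∈ Finset.range K', N k + N K' := by
      rw [hK']
      exact Finset.sum_range_succ N K'
    have hPsum := hsumP K'
    have hKz : (K:ℤ) = (K':ℤ) + 1 := by rw [hK']; push_cast; ring
    have hkey : L * (K':ℤ) * N K' + ((tn:ℤ) + 1 - N K') * (((K':ℤ)+1) * L) + L * N K'
        = L * ((K':ℤ)+1) * ((tn:ℤ)+1) := by ring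
    rw [hTsplit, hrs, hKz]
    have h1 : ∑ g ∈ E, (lam B g : ℤ) ≤ ((tn:ℤ) + 1 - N K') * (((K':ℤ)+1) * L) := by
      rw [hKz] at hEbound
      exact hEbound
    linarith
  -- lower bound for the T-sum
  have hTlow : (b:ℤ) * ((tn:ℤ)+1) - (b:ℤ)^2 ≤ ∑ g ∈ T, (lam B g : ℤ) := by
    have hlameq : ∀ g : G, (lam B g : ℤ) = (b:ℤ) - ((B.filter (fun u => u - g ∈ B)).card : ℤ) := by
      intro g
      have := lam_card_eq B g
      rw [hb] at this
      omega
    have hsum1 : ∑ g ∈ T, (lam B g : ℤ)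
        = ((tn:ℤ)+1) * (b:ℤ) - ∑ g ∈ T, ((B.filter (fun u => u - g ∈ B)).card : ℤ) := by
      rw [Finset.sum_congr rfl (fun g _ => hlameq g), Finset.sum_sub_distrib,
        Finset.sum_const, hTcard]
      push_cast
      ring
    have htotal : ∑ g ∈ Finset.univ, (B.filter (fun u => u - g ∈ B)).card = b * b := by
      have hrw : ∀ g : G, (B.filter (fun u => u - g ∈ B)).card
          = ∑ u ∈ B, (if u - g ∈ B then 1 else 0) := by
        intro g
        rw [Finset.card_filter]
      rw [Finset.sum_congr rfl (fun g _ => hrw g), Finset.sum_comm]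
      have hinner : ∀ u : G, ∑ g ∈ Finset.univ, (if u - g ∈ B then 1 else 0) = b := by
        intro u
        rw [← Finset.card_filter]
        have himg : Finset.univ.filter (fun g => u - g ∈ B) = B.image (fun v => u - v) := by
          ext g
          simp only [Finset.mem_filter, Finset.mem_univ, true_and, Finset.mem_image]
          constructor
          · intro h
            exact ⟨u - g, h, by abel⟩
          · rintro ⟨v, hv, rfl⟩
            have : u - (u - v) = v := by abel
            rw [this]
            exact hv
        rw [himg, Finset.card_image_of_injective _ sub_right_injective, hb]
      rw [Finset.sum_congr rfl (fun u _ => hinner u), Finset.sum_const, hb, smul_eq_mul]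
    have hle : ∑ g ∈ T, ((B.filter (fun u => u - g ∈ B)).card : ℤ) ≤ (b:ℤ)^2 := by
      have h1 : ∑ g ∈ T, (B.filter (fun u => u - g ∈ B)).card
          ≤ ∑ g ∈ Finset.univ, (B.filter (fun u => u - g ∈ B)).card :=
        Finset.sum_le_sum_of_subset (Finset.subset_univ T)
      rw [htotal] at h1
      calc ∑ g ∈ T, ((B.filter (fun u => u - g ∈ B)).card : ℤ)
          = ((∑ g ∈ T, (B.filter (fun u => u - g ∈ B)).card : ℕ) : ℤ) := by push_cast; rfl
        _ ≤ ((b*b : ℕ) : ℤ) := by exact_mod_cast h1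
        _ = (b:ℤ)^2 := by push_cast; ring
    rw [hsum1]
    linarith
  -- ====== comparison of Dsum with Den ======
  set AA : ℤ := ∑ k ∈ Finset.range rn, ((tn:ℤ) + 2 - ((k:ℤ)+1) * ((m:ℕ):ℤ)) with hAA
  set Den : ℤ := (tn:ℤ) + AA with hDen
  have hterm : ∀ k : ℕ, k + 1 < K → (tn:ℤ) + 1 - N (k+1) ≤ (tn:ℤ) + 2 - ((k:ℤ)+1) * ((m:ℕ):ℤ) := by
    intro k hk
    have h1 := hgrow k
    have h2 := hKmin (k+1) hk
    have hcast : (((k+1) * m : ℕ) : ℤ) = ((k:ℤ)+1) * ((m:ℕ):ℤ) := by push_cast; ring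
    have h3 : (k+1) * m - 1 ≤ (P (k+1)).card := by
      rcases le_total (Fintype.card G) ((k+1)*m - 1) with hc | hc
      · rw [min_eq_left hc] at h1
        omega
      · rw [min_eq_right hc] at h1
        exact h1
    have h4 : (k+1) * m ≤ (P (k+1)).card + 1 := by omega
    have h5 : ((k:ℤ)+1) * ((m:ℕ):ℤ) ≤ N (k+1) + 1 := by
      have hx : (((k+1) * m : ℕ) : ℤ) ≤ ((P (k+1)).card : ℤ) + 1 := by exact_mod_cast h4
      rw [hcast] at hx
      exact hx
    have h6 : N (k+1) ≤ (tn : ℤ) := by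
      show ((P (k+1)).card : ℤ) ≤ (tn : ℤ)
      exact_mod_cast h2
    linarith
  have hrangesub : Finset.range K' ⊆ Finset.range rn := Finset.range_subset_range.2 (by omega)
  have htermpos : ∀ k ∈ Finset.range rn, (0:ℤ) ≤ (tn:ℤ) + 2 - ((k:ℤ)+1) * ((m:ℕ):ℤ) := by
    intro k hk
    rw [Finset.mem_range] at hk
    have h1 : ((k:ℤ)+1) * ((m:ℕ):ℤ) ≤ (rn:ℤ) * ((m:ℕ):ℤ) := by
      apply mul_le_mul_of_nonneg_right _ (by positivity)
      have : (k:ℤ) + 1 ≤ (rn:ℤ) := by exact_mod_cast hk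
      exact this
    have h2 : (rn:ℤ) * ((m:ℕ):ℤ) = (tn:ℤ) - q := by linarith [ht']
    omega
  have hDsumDen : (K:ℤ) * ((tn:ℤ)+1) - (∑ k ∈ Finset.range K, N k) ≤ Den := by
    have hsumrw : ∑ k ∈ Finset.range K, ((tn:ℤ) + 1 - N k)
        = (K:ℤ) * ((tn:ℤ)+1) - ∑ k ∈ Finset.range K, N k := by
      rw [Finset.sum_sub_distrib, Finset.sum_const, Finset.card_range]
      push_cast
      ring
    have hsum_succ : ∑ k ∈ Finset.range (K'+1), ((tn:ℤ) + 1 - N k)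
        = (∑ k ∈ Finset.range K', ((tn:ℤ) + 1 - N (k+1))) + ((tn:ℤ) + 1 - N 0) :=
      Finset.sum_range_succ' _ K'
    rw [← hsumrw, hK', hsum_succ]
    have hN0 : N 0 = 1 := by
      show ((P 0).card : ℤ) = 1
      rw [hP0card]
      rfl
    have hstep1 : ∑ k ∈ Finset.range K', ((tn:ℤ) + 1 - N (k+1))
        ≤ ∑ k ∈ Finset.range K', ((tn:ℤ) + 2 - ((k:ℤ)+1) * ((m:ℕ):ℤ)) := by
      apply Finset.sum_le_sum
      intro k hk
      rw [Finset.mem_range] at hk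
      exact hterm k (by omega)
    have hstep2 : ∑ k ∈ Finset.range K', ((tn:ℤ) + 2 - ((k:ℤ)+1) * ((m:ℕ):ℤ)) ≤ AA := by
      rw [hAA]
      exact Finset.sum_le_sum_of_subset_of_nonneg hrangesub
        (fun k hk _ => htermpos k hk)
    linarith [hstep1, hstep2, hN0, hDen.le, hDen.ge]
  -- ====== the main integer inequality ======
  have hmainZ : (b:ℤ) * ((tn:ℤ) + 1 - (b:ℤ)) ≤ L * Den := by
    have h1 : ∑ g ∈ T, (lam B g : ℤ) ≤ L * ((K:ℤ) * ((tn:ℤ)+1) - ∑ k ∈ Finset.range K, N k) := by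
      have hx : L * ((K:ℤ) * ((tn:ℤ)+1) - ∑ k ∈ Finset.range K, N k)
          = L * (K:ℤ) * ((tn:ℤ)+1) - L * ∑ k ∈ Finset.range K, N k := by ring
      rw [hx]
      linarith [hTup]
    have h2 : L * ((K:ℤ) * ((tn:ℤ)+1) - ∑ k ∈ Finset.range K, N k) ≤ L * Den :=
      mul_le_mul_of_nonneg_left hDsumDen hL0
    have h3 : (b:ℤ) * ((tn:ℤ) + 1 - (b:ℤ)) = (b:ℤ) * ((tn:ℤ)+1) - (b:ℤ)^2 := by ring
    linarith
  -- ====== the algebraic identity ======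
  set Dgz : ℤ := t * (t + 2*(s:ℤ) + 6) + q * (2*(s:ℤ) - q - 2) with hDgz0
  have hAA2 : 2 * AA = 2*(rn:ℤ)*((tn:ℤ)+2) - ((m:ℕ):ℤ)*(rn:ℤ)*((rn:ℤ)+1) := by
    rw [hAA]
    exact sum_range_lin ((m:ℕ):ℤ) ((tn:ℤ)+2) rn
  have hDgz : Dgz = 2 * ((m:ℕ):ℤ) * Den := by
    have hz := zid (tn:ℤ) (rn:ℤ) q (s:ℤ) ((m:ℕ):ℤ) AA Den ht' hmz hAA2 hDen
    rw [htz] at hz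
    rw [hDgz0]
    exact hz
  have hAApos : 0 ≤ AA := by
    rw [hAA]
    exact Finset.sum_nonneg htermpos
  have hDenpos : 1 ≤ Den := by
    rw [hDen]
    omega
  have hmpos : (1:ℤ) ≤ ((m:ℕ):ℤ) := by
    rw [hmz]
    have : (0:ℤ) ≤ (s:ℤ) := by positivity
    linarith
  have hDgzpos : 0 < Dgz := by
    rw [hDgz]
    have h8 : (0:ℤ) < ((m:ℕ):ℤ) := by linarith
    have h9 : (0:ℤ) < Den := by linarith
    have := mul_pos (mul_pos (by norm_num : (0:ℤ) < 2) h8) h9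
    linarith
  -- ====== finish in ℚ ======
  have hfinZ : 4*((s:ℤ)+1)*(b:ℤ)*(t - (b:ℤ) + 1) ≤ (lmax:ℤ) * Dgz := by
    have h1 : 2*((m:ℕ):ℤ)*((b:ℤ) * ((tn:ℤ) + 1 - (b:ℤ))) ≤ 2*((m:ℕ):ℤ)*(L * Den) :=
      mul_le_mul_of_nonneg_left hmainZ (by positivity)
    have h2 : 4*((s:ℤ)+1)*(b:ℤ)*(t - (b:ℤ) + 1) = 2*((m:ℕ):ℤ)*((b:ℤ) * ((tn:ℤ) + 1 - (b:ℤ))) := by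
      rw [hmz, htz]
      ring
    have h3 : 2*((m:ℕ):ℤ)*(L * Den) = (lmax:ℤ) * Dgz := by
      rw [hDgz, hL]
      ring
    calc 4*((s:ℤ)+1)*(b:ℤ)*(t - (b:ℤ) + 1)
        = 2*((m:ℕ):ℤ)*((b:ℤ) * ((tn:ℤ) + 1 - (b:ℤ))) := h2
      _ ≤ 2*((m:ℕ):ℤ)*(L * Den) := h1
      _ = (lmax:ℤ) * Dgz := h3
  have hDq : ((Dgz : ℤ) : ℚ)
      = (t:ℚ) * ((t:ℚ) + 2*(s:ℚ) + 6) + (q:ℚ) * (2*(s:ℚ) - (q:ℚ) - 2) := by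
    rw [hDgz0]
    push_cast
    ring
  have hDqpos : (0:ℚ) < (t:ℚ) * ((t:ℚ) + 2*(s:ℚ) + 6) + (q:ℚ) * (2*(s:ℚ) - (q:ℚ) - 2) := by
    rw [← hDq]
    exact_mod_cast hDgzpos
  rw [div_le_iff₀ hDqpos]
  have hQ : ((4*((s:ℤ)+1)*(b:ℤ)*(t - (b:ℤ) + 1) : ℤ) : ℚ) ≤ (((lmax:ℤ) * Dgz : ℤ) : ℚ) := by
    exact_mod_cast hfinZ
  push_cast at hQ
  rw [hDq] at hQ
  push_cast at hQ
  linarith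
end

section
/- Let G be a finite abelian group and let S ⊆ G be a subset with S ∩ (−S) = ∅. Then |Σ(S)| ≥ 2|S|. -/
open Finset

/-- The set of all subset sums of a finset `S` (including the empty sum `0`). -/
def subsetSums {G : Type*} [AddCommGroup G] [DecidableEq G] (S : Finset G) : Finset G :=
  S.powerset.image (fun T => T.sum id)

lemma zero_mem_subsetSums {G : Type*} [AddCommGroup G] [DecidableEq G] (S : Finset G) :
    (0 : G) ∈ subsetSums S := by
  simp only [subsetSums, mem_image]
  exact ⟨∅, by simp⟩

lemma mem_subsetSums_of_mem {G : Type*} [AddCommGroup G] [DecidableEq G] {S : Finset G} {a : G}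
    (ha : a ∈ S) : a ∈ subsetSums S := by
  simp only [subsetSums, mem_image]
  exact ⟨{a}, by simpa using ha, by simp⟩

lemma subsetSums_insert {G : Type*} [AddCommGroup G] [DecidableEq G] (S : Finset G) (a : G)
    (ha : a ∉ S) :
    subsetSums (insert a S) = subsetSums S ∪ (subsetSums S).image (· + a) := by
  ext x
  simp only [subsetSums, powerset_insert, image_union, image_image, mem_union, mem_image,
    mem_powerset, Function.comp]
  constructor
  · rintro (⟨T, hT, rfl⟩ | ⟨T, hT, rfl⟩)
    · exact Or.inl ⟨T, hT, rfl⟩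
    · right
      refine ⟨T, hT, ?_⟩
      rw [Finset.sum_insert (fun h => ha (hT h)), add_comm]
      rfl
  · rintro (⟨T, hT, rfl⟩ | ⟨T, hT, rfl⟩)
    · exact Or.inl ⟨T, hT, rfl⟩
    · right
      refine ⟨T, hT, ?_⟩
      rw [Finset.sum_insert (fun h => ha (hT h)), add_comm]
      rfl

/-- The double-counting core: if `A` has at least two elements, all elements of `D` are
nonzero, and for every `d ∈ D` all but at most one element of `A` stays in `A` after
translation by `d`, then `|D| ≤ |A|`. -/
lemma key_count {G : Type*} [AddCommGroup G] [DecidableEq G] (A D : Finset G)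
    (h2 : 2 ≤ A.card) (hD0 : ∀ d ∈ D, d ≠ 0)
    (h : ∀ d ∈ D, A.card ≤ (A.filter (fun x => x + d ∈ A)).card + 1) :
    D.card ≤ A.card := by
  classical
  set t : G → Finset (G × G) := fun d => (A.filter (fun x => x + d ∈ A)).image
    (fun x => (x, x + d)) with ht
  have hinj : ∀ d : G, Function.Injective (fun x : G => (x, x + d)) := by
    intro d x y hxy
    exact congrArg Prod.fst hxy
  have hcard : ∀ d : G, (t d).card = (A.filter (fun x => x + d ∈ A)).card := by
    intro d
    exact card_image_of_injective _ (hinj d)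
  have hpd : ∀ d ∈ D, ∀ e ∈ D, d ≠ e → Disjoint (t d) (t e) := by
    intro d _ e _ hde
    rw [Finset.disjoint_left]
    intro p hp hq
    simp only [ht, mem_image, mem_filter] at hp hq
    obtain ⟨x, _, rfl⟩ := hp
    obtain ⟨y, _, hy⟩ := hq
    have hxy : y = x := congrArg Prod.fst hy
    subst hxy
    have h2' : y + e = y + d := congrArg Prod.snd hy
    exact hde (add_left_cancel h2').symm
  have hsub : D.biUnion t ⊆ A.offDiag := by
    intro p hp
    rw [mem_biUnion] at hp
    obtain ⟨d, hd, hp⟩ := hp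
    simp only [ht, mem_image, mem_filter] at hp
    obtain ⟨x, ⟨hx, hxd⟩, rfl⟩ := hp
    rw [mem_offDiag]
    refine ⟨hx, hxd, ?_⟩
    intro hxx
    exact hD0 d hd (by simpa using hxx.symm)
  have h1 : D.card * (A.card - 1) ≤ ∑ d ∈ D, (t d).card := by
    calc D.card * (A.card - 1) = ∑ _d ∈ D, (A.card - 1) := by
          rw [Finset.sum_const, smul_eq_mul]
      _ ≤ ∑ d ∈ D, (t d).card := by
          apply Finset.sum_le_sum
          intro d hd
          rw [hcard]
          have := h d hd
          omega
  have h2' : ∑ d ∈ D, (t d).card = (D.biUnion t).card := (Finset.card_biUnion hpd).symm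
  have h3 : (D.biUnion t).card ≤ A.offDiag.card := card_le_card hsub
  have h4 : A.offDiag.card = A.card * A.card - A.card := Finset.offDiag_card A
  have h5 : A.card * A.card - A.card = A.card * (A.card - 1) := by
    obtain ⟨k, hk⟩ := Nat.exists_eq_succ_of_ne_zero (by omega : A.card ≠ 0)
    rw [hk]
    simp [Nat.succ_sub_one, Nat.mul_succ]
  have h6 : D.card * (A.card - 1) ≤ A.card * (A.card - 1) := by
    calc D.card * (A.card - 1) ≤ ∑ d ∈ D, (t d).card := h1
      _ = (D.biUnion t).card := h2'
      _ ≤ A.offDiag.card := h3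
      _ = A.card * A.card - A.card := h4
      _ = A.card * (A.card - 1) := h5
  have h7 : 0 < A.card - 1 := by omega
  exact Nat.le_of_mul_le_mul_right h6 h7

theorem stmt_9 {G : Type*} [AddCommGroup G] [Fintype G] [DecidableEq G] (S : Finset G)
    (hdisj : S ∩ S.image (fun x => -x) = ∅) :
    2 * S.card ≤ (subsetSums S).card := by
  classical
  revert hdisj
  induction S using Finset.strongInduction with
  | _ S IH =>
  intro hdisj
  rcases S.eq_empty_or_nonempty with rfl | ⟨a0, ha0⟩
  · simp
  by_cases hex : ∃ a ∈ S, (subsetSums (S.erase a)).card + 2 ≤ (subsetSums S).card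
  · obtain ⟨a, haS, hle⟩ := hex
    have herase : (S.erase a) ∩ (S.erase a).image (fun x => -x) = ∅ := by
      have hsub : (S.erase a) ∩ (S.erase a).image (fun x => -x) ⊆
          S ∩ S.image (fun x => -x) :=
        inter_subset_inter (erase_subset _ _) (image_subset_image (erase_subset _ _))
      rw [hdisj] at hsub
      exact subset_empty.mp hsub
    have h1 := IH (S.erase a) (erase_ssubset haS) herase
    have hpos : 0 < S.card := card_pos.mpr ⟨a, haS⟩
    have hc : (S.erase a).card = S.card - 1 := card_erase_of_mem haS
    omega
  · push_neg at hex
    set A := subsetSums S with hA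
    have hzero : (0 : G) ∉ S := by
      intro h
      have : (0 : G) ∈ S ∩ S.image (fun x => -x) :=
        mem_inter.mpr ⟨h, mem_image.mpr ⟨0, h, by simp⟩⟩
      rw [hdisj] at this
      exact notMem_empty _ this
    -- Step 1: for each a ∈ S, |(A + a) \ A| ≤ 1
    have key1 : ∀ a ∈ S, ((A.image (· + a)) \ A).card ≤ 1 := by
      intro a haS
      set A' := subsetSums (S.erase a) with hA'
      have hins : insert a (S.erase a) = S := insert_erase haS
      have hAeq : A = A' ∪ A'.image (· + a) := by
        rw [hA, ← hins, subsetSums_insert _ _ (notMem_erase a S)]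
      have hcard1 : A.card ≤ A'.card + 1 := by
        have h' := hex a haS
        rw [← hA'] at h'
        omega
      have hX : ((A'.image (· + a)) \ A').card ≤ 1 := by
        have hs : ((A'.image (· + a)) \ A').card + A'.card = ((A'.image (· + a)) ∪ A').card :=
          card_sdiff_add_card _ _
        have hu : (A'.image (· + a)) ∪ A' = A := by
          rw [hAeq]; exact union_comm _ _
        rw [hu] at hs
        omega
      have hsub : (A.image (· + a)) \ A ⊆ ((A'.image (· + a)) \ A').image (· + a) := by
        intro y hy
        rw [mem_sdiff, mem_image] at hy
        obtain ⟨⟨x, hxA, rfl⟩, hyA⟩ := hy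
        rw [hAeq, mem_union] at hxA
        rcases hxA with hx | hx
        · exact absurd (by rw [hAeq]; exact mem_union_right _ (mem_image_of_mem _ hx)) hyA
        · refine mem_image_of_mem _ (mem_sdiff.mpr ⟨hx, fun hx' => hyA ?_⟩)
          rw [hAeq]
          exact mem_union_right _ (mem_image_of_mem _ hx')
      calc ((A.image (· + a)) \ A).card
          ≤ (((A'.image (· + a)) \ A').image (· + a)).card := card_le_card hsub
        _ ≤ ((A'.image (· + a)) \ A').card := card_image_le
        _ ≤ 1 := hX
    -- Step 2: assemble D and the filter bound
    set D := S ∪ S.image (fun x => -x) with hD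
    have hDcard : D.card = 2 * S.card := by
      rw [hD, card_union_of_disjoint (disjoint_iff_inter_eq_empty.mpr hdisj),
        card_image_of_injective _ neg_injective]
      omega
    have hD0 : ∀ d ∈ D, d ≠ 0 := by
      intro d hd
      rw [hD, mem_union] at hd
      rintro rfl
      rcases hd with h | h
      · exact hzero h
      · rw [mem_image] at h
        obtain ⟨x, hx, hx0⟩ := h
        rw [neg_eq_zero] at hx0
        exact hzero (hx0 ▸ hx)
    have hfilter : ∀ d ∈ D, A.card ≤ (A.filter (fun x => x + d ∈ A)).card + 1 := by
      intro d hd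
      have hsplit : (A.filter (fun x => x + d ∈ A)).card
          + (A.filter (fun x => ¬ (x + d ∈ A))).card = A.card :=
        Finset.card_filter_add_card_filter_not _
      have hneg : (A.filter (fun x => ¬ (x + d ∈ A))).card ≤ 1 := by
        rw [hD, mem_union] at hd
        rcases hd with hdS | hdN
        · -- d ∈ S : inject x ↦ x + d into (A.image (·+d)) \ A
          have : (A.filter (fun x => ¬ (x + d ∈ A))).card
              ≤ ((A.image (· + d)) \ A).card := by
            apply Finset.card_le_card_of_injOn (fun x => x + d)
            · intro x hx
              rw [mem_coe, mem_filter] at hx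
              exact mem_coe.mpr (mem_sdiff.mpr ⟨mem_image_of_mem _ hx.1, hx.2⟩)
            · intro x _ y _ hxy
              exact add_right_cancel hxy
          exact this.trans (key1 d hdS)
        · -- d = -a for a ∈ S : the filter equals A \ (A.image (·+a))
          rw [mem_image] at hdN
          obtain ⟨a, haS, rfl⟩ := hdN
          have heq : A.filter (fun x => ¬ (x + -a ∈ A)) = A \ (A.image (· + a)) := by
            ext x
            simp only [mem_filter, mem_sdiff, mem_image]
            constructor
            · rintro ⟨hx, hna⟩
              refine ⟨hx, fun ⟨z, hz, hzx⟩ => hna ?_⟩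
              rw [← hzx]
              simpa using hz
            · rintro ⟨hx, hna⟩
              refine ⟨hx, fun hmem => hna ⟨x + -a, hmem, by abel⟩⟩
          have hflt : (A.filter (fun x => ¬ (x + -a ∈ A))).card
              = (A \ (A.image (· + a))).card := congrArg Finset.card heq
          have hXcard : (A.image (· + a)).card = A.card :=
            card_image_of_injective _ (add_left_injective a)
          have e1 : (A \ (A.image (· + a))).card + (A ∩ (A.image (· + a))).card = A.card :=
            Finset.card_sdiff_add_card_inter A (A.image (· + a))
          have e2 : ((A.image (· + a)) \ A).card + ((A.image (· + a)) ∩ A).card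
              = (A.image (· + a)).card :=
            Finset.card_sdiff_add_card_inter (A.image (· + a)) A
          have e3 : (A ∩ (A.image (· + a))).card = ((A.image (· + a)) ∩ A).card := by
            rw [inter_comm]
          have hk := key1 a haS
          omega
      omega
    have h2A : 2 ≤ A.card := by
      have h0A : (0 : G) ∈ A := zero_mem_subsetSums S
      have haA : a0 ∈ A := mem_subsetSums_of_mem ha0
      have hne : a0 ≠ 0 := fun h => hzero (h ▸ ha0)
      have h1lt : 1 < A.card := Finset.one_lt_card.mpr ⟨0, h0A, a0, haA, hne.symm⟩
      omega
    calc 2 * S.card = D.card := hDcard.symm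
      _ ≤ A.card := key_count A D h2A hD0 hfilter
end

section
/- Let G be a finite abelian group and let B, C be non-empty subsets of G with 0 ∉ C. Then Σ_{x ∈ C} λ_B(x) ≥ |B|·(|C| − |B| + 1). -/
open Finset

theorem stmt_11 {G : Type*} [AddCommGroup G] [Fintype G] [DecidableEq G] (B C : Finset G)
    (hB : B.Nonempty) (hC : C.Nonempty) (h0 : 0 ∉ C) :
    (B.card : ℤ) * ((C.card : ℤ) - (B.card : ℤ) + 1) ≤ ∑ x ∈ C, (lam B x : ℤ) := by
  have himg : ∀ x : G, (B.image (· + x)).card = B.card := fun x =>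
    Finset.card_image_of_injective _ (add_left_injective x)
  have hlam : ∀ x : G, (lam B x : ℤ) = (B.card : ℤ) - (((B.image (· + x)) ∩ B).card : ℤ) := by
    intro x
    have h := Finset.card_sdiff_add_card_inter (B.image (· + x)) B
    rw [himg x] at h
    unfold lam
    omega
  -- rewrite the intersection count as a filter count
  have h1 : ∀ x : G, ((B.image (· + x)) ∩ B).card
      = (B.filter (fun b => b - x ∈ B)).card := by
    intro x
    congr 1
    ext b
    simp only [Finset.mem_inter, Finset.mem_image, Finset.mem_filter]
    constructor
    · rintro ⟨⟨a, ha, rfl⟩, hb⟩; exact ⟨hb, by simpa using ha⟩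
    · rintro ⟨hb, ha⟩; exact ⟨⟨b - x, ha, by abel⟩, hb⟩
  -- total sum over the group
  have hsum : ∑ x : G, ((B.image (· + x)) ∩ B).card = B.card * B.card := by
    simp only [h1, Finset.card_filter]
    rw [Finset.sum_comm]
    have h2 : ∀ b : G, (∑ x : G, if b - x ∈ B then 1 else 0) = B.card := by
      intro b
      rw [← Finset.sum_filter]
      have heq : Finset.univ.filter (fun x => b - x ∈ B) = B.image (fun y => b - y) := by
        ext x
        simp only [Finset.mem_filter, Finset.mem_univ, true_and, Finset.mem_image]
        constructor
        · intro hx; exact ⟨b - x, hx, by abel⟩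
        · rintro ⟨y, hy, rfl⟩; simpa using hy
      rw [Finset.sum_const, heq, Finset.card_image_of_injective _ (sub_right_injective), smul_eq_mul, mul_one]
    rw [Finset.sum_congr rfl (fun b _ => h2 b), Finset.sum_const, smul_eq_mul]
  -- the value at 0
  have h0val : ((B.image (· + 0)) ∩ B).card = B.card := by
    simp
  -- sum over nonzero elements
  have herase : ∑ x ∈ Finset.univ.erase 0, ((B.image (· + x)) ∩ B).card
      = B.card * B.card - B.card := by
    have h := Finset.sum_erase_add Finset.univ
      (fun x => ((B.image (· + x)) ∩ B).card) (Finset.mem_univ (0 : G))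
    beta_reduce at h
    rw [hsum, h0val] at h
    omega
  have hCsub : C ⊆ Finset.univ.erase 0 := fun x hx =>
    Finset.mem_erase.mpr ⟨fun h => h0 (h ▸ hx), Finset.mem_univ x⟩
  have hCle : ∑ x ∈ C, ((B.image (· + x)) ∩ B).card ≤ B.card * B.card - B.card := by
    rw [← herase]
    exact Finset.sum_le_sum_of_subset hCsub
  have hBle : B.card ≤ B.card * B.card := Nat.le_mul_of_pos_left _ (Finset.card_pos.mpr hB)
  -- finish
  calc (B.card : ℤ) * ((C.card : ℤ) - (B.card : ℤ) + 1)
      = (C.card : ℤ) * B.card - ((B.card * B.card - B.card : ℕ) : ℤ) := by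
        push_cast [Nat.cast_sub hBle]
        ring
    _ ≤ (C.card : ℤ) * B.card - (∑ x ∈ C, ((B.image (· + x)) ∩ B).card : ℤ) := by
        have : ((∑ x ∈ C, ((B.image (· + x)) ∩ B).card : ℕ) : ℤ)
            ≤ ((B.card * B.card - B.card : ℕ) : ℤ) := by exact_mod_cast hCle
        linarith
    _ = ∑ x ∈ C, (lam B x : ℤ) := by
        rw [Finset.sum_congr rfl (fun x _ => hlam x), Finset.sum_sub_distrib,
          Finset.sum_const, nsmul_eq_mul]
end

section
/- Let G be a finite abelian group, let S ⊆ G, and let x ∈ S. Then |Σ(S)| ≥ |Σ(S \ {x})| + λ_B(x), where B = Σ(S). -/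
open Finset

lemma mem_subsetSums {G : Type*} [AddCommGroup G] [DecidableEq G] {S : Finset G} {y : G} :
    y ∈ subsetSums S ↔ ∃ T ⊆ S, T.sum id = y := by
  simp [subsetSums, mem_image, mem_powerset]

theorem stmt_13 {G : Type*} [AddCommGroup G] [Fintype G] [DecidableEq G] (S : Finset G)
    (x : G) (hx : x ∈ S) :
    (subsetSums (S \ {x})).card + lam (subsetSums S) x ≤ (subsetSums S).card := by
  classical
  set A := subsetSums (S \ {x}) with hA
  set B := subsetSums S with hB
  have hinj : Function.Injective (· + x : G → G) := add_left_injective x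
  have hAB : A ⊆ B := by
    intro y hy
    rw [hA, mem_subsetSums] at hy
    obtain ⟨T, hT, rfl⟩ := hy
    exact mem_subsetSums.2 ⟨T, hT.trans sdiff_subset, rfl⟩
  have hAxB : A.image (· + x) ⊆ B := by
    intro y hy
    rw [mem_image] at hy
    obtain ⟨z, hz, rfl⟩ := hy
    rw [hA, mem_subsetSums] at hz
    obtain ⟨T, hT, rfl⟩ := hz
    have hxT : x ∉ T := fun h => (mem_sdiff.1 (hT h)).2 (mem_singleton_self x)
    refine mem_subsetSums.2 ⟨insert x T, ?_, ?_⟩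
    · intro a ha
      rcases mem_insert.1 ha with rfl | ha
      · exact hx
      · exact (mem_sdiff.1 (hT ha)).1
    · rw [sum_insert hxT]
      simp [add_comm]
  have hBsub : B ⊆ A ∪ A.image (· + x) := by
    intro y hy
    rw [hB, mem_subsetSums] at hy
    obtain ⟨T, hT, rfl⟩ := hy
    by_cases hxT : x ∈ T
    · refine mem_union_right _ ?_
      rw [mem_image]
      refine ⟨(T.erase x).sum id, mem_subsetSums.2 ⟨T.erase x, ?_, rfl⟩, ?_⟩
      · intro a ha
        rw [mem_sdiff, mem_singleton]
        exact ⟨hT (mem_of_mem_erase ha), ne_of_mem_erase ha⟩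
      · rw [add_comm]; exact Finset.add_sum_erase T id hxT
    · exact mem_union_left _ (mem_subsetSums.2 ⟨T, fun a ha =>
        mem_sdiff.2 ⟨hT ha, by rw [mem_singleton]; rintro rfl; exact hxT ha⟩, rfl⟩)
  -- (B+x)\B ⊆ (A+2x)\(A+x)
  have hkey : (B.image (· + x)) \ B ⊆
      ((A.image (· + x)).image (· + x)) \ (A.image (· + x)) := by
    intro y hy
    rw [mem_sdiff] at hy ⊢
    obtain ⟨hy1, hy2⟩ := hy
    rw [mem_image] at hy1
    obtain ⟨b, hb, rfl⟩ := hy1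
    have hb' := hBsub hb
    rcases mem_union.1 hb' with hbA | hbAx
    · exact absurd (hAxB (mem_image_of_mem _ hbA)) hy2
    · exact ⟨mem_image_of_mem _ hbAx, fun h => hy2 (hAxB h)⟩
  have htrans : (((A.image (· + x)).image (· + x)) \ (A.image (· + x))).card
      = ((A.image (· + x)) \ A).card := by
    rw [← Finset.image_sdiff _ _ hinj, card_image_of_injective _ hinj]
  have hlam : lam B x ≤ ((A.image (· + x)) \ A).card := by
    rw [lam, ← htrans]
    exact card_le_card hkey
  calc A.card + lam B x ≤ A.card + ((A.image (· + x)) \ A).card :=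
        Nat.add_le_add_left hlam _
    _ = ((A.image (· + x)) \ A).card + A.card := Nat.add_comm _ _
    _ = ((A.image (· + x)) ∪ A).card := card_sdiff_add_card _ _
    _ ≤ B.card := card_le_card (union_subset hAxB hAB)
end

section
/- Let G be a finite abelian group, let S ⊆ G be a generating subset, set Ŝ = S ∪ {0} ∪ (−S), and let H be a subgroup of G with |Ŝ + H| < min(|G|, |Ŝ| + |H|). Then the sumset 2Ŝ = Ŝ + Ŝ is H-periodic, i.e., Ŝ + Ŝ + H = Ŝ + Ŝ. -/
open Finset Pointwise

theorem stmt_16 {G : Type*} [AddCommGroup G] [Fintype G] [DecidableEq G] (S : Finset G)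
    (hgen : AddSubgroup.closure (S : Set G) = ⊤)
    (H : AddSubgroup G)
    (hH : ((↑(S ∪ {0} ∪ S.image (fun x => -x)) : Set G) + (H : Set G)).ncard <
        min (Fintype.card G) ((S ∪ {0} ∪ S.image (fun x => -x)).card + Nat.card H)) :
    (↑(S ∪ {0} ∪ S.image (fun x => -x)) : Set G) + (↑(S ∪ {0} ∪ S.image (fun x => -x)) : Set G)
        + (H : Set G)
      = (↑(S ∪ {0} ∪ S.image (fun x => -x)) : Set G)
        + (↑(S ∪ {0} ∪ S.image (fun x => -x)) : Set G) := by
  classical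
  set T : Finset G := S ∪ {0} ∪ S.image (fun x => -x) with hT
  have h0T : (0 : G) ∈ T := by simp [hT]
  have hST : S ⊆ T := by intro s hs; simp [hT, hs]
  have hneg : ∀ s ∈ T, -s ∈ T := by
    intro s hs
    simp only [hT, mem_union, mem_image, mem_singleton] at hs ⊢
    rcases hs with (hs | hs) | ⟨y, hy, rfl⟩
    · exact Or.inr ⟨s, hs, rfl⟩
    · subst hs; left; right; simp
    · left; left; simpa using hy
  set HF : Finset G := Finset.univ.filter (fun y => y ∈ H) with hHF
  have memHF : ∀ y : G, y ∈ HF ↔ y ∈ H := by intro y; simp [hHF]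
  have hHFcard : HF.card = Nat.card H := by
    rw [Nat.card_eq_fintype_card, Fintype.card_subtype]
  have hHset : (H : Set G) = (↑HF : Set G) := by
    ext y; simp [memHF]
  -- translate the card hypothesis
  have hHcard : (T + HF).card < min (Fintype.card G) (T.card + HF.card) := by
    have : ((↑T : Set G) + (H : Set G)).ncard = (T + HF).card := by
      rw [hHset, ← Finset.coe_add, Set.ncard_coe_finset]
    rw [hHFcard]
    rw [← this]
    exact hH
  have hTH1 : (T + HF).card < Fintype.card G := lt_of_lt_of_le hHcard (min_le_left _ _)
  have hTH2 : (T + HF).card < T.card + HF.card := lt_of_lt_of_le hHcard (min_le_right _ _)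
  -- coset intersections
  set A : G → Finset G := fun c => T.filter (fun t => t - c ∈ H) with hA
  set Ca : G → Finset G := fun c => Finset.univ.filter (fun y => y - c ∈ H) with hCa
  have hCaCard : ∀ c : G, (Ca c).card = HF.card := by
    intro c
    have : Ca c = HF.image (fun h => h + c) := by
      ext y
      simp only [hCa, hHF, mem_filter, mem_univ, true_and, mem_image]
      constructor
      · intro hy; exact ⟨y - c, by simpa using hy, by abel⟩
      · rintro ⟨h, hh, rfl⟩; simpa using (by simpa using hh : h ∈ H)
    rw [this, Finset.card_image_of_injective _ (add_left_injective c)]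
  have hACa : ∀ c : G, A c ⊆ Ca c := by
    intro c t ht
    simp only [hA, mem_filter] at ht
    simp only [hCa, mem_filter, mem_univ, true_and]
    exact ht.2
  -- filling lemma
  have fill : ∀ a b x : G, x - (a + b) ∈ H → HF.card < (A a).card + (A b).card →
      ∃ p ∈ T, ∃ q ∈ T, p + q = x := by
    intro a b x hx hcard
    set B' : Finset G := (A b).image (fun q => x - q) with hB'
    have hB'sub : B' ⊆ Ca a := by
      rintro y hy
      simp only [hB', mem_image] at hy
      obtain ⟨q, hq, rfl⟩ := hy
      simp only [hA, mem_filter] at hq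
      simp only [hCa, mem_filter, mem_univ, true_and]
      have : x - q - a = (x - (a + b)) - (q - b) := by abel
      rw [this]
      exact sub_mem hx hq.2
    have hB'card : B'.card = (A b).card :=
      Finset.card_image_of_injective _ (fun u v huv => sub_right_injective huv)
    have hunion : (A a ∪ B').card ≤ HF.card := by
      calc (A a ∪ B').card ≤ (Ca a).card :=
            Finset.card_le_card (Finset.union_subset (hACa a) hB'sub)
        _ = HF.card := hCaCard a
    have hinter : 0 < (A a ∩ B').card := by
      have := Finset.card_union_add_card_inter (A a) B'
      omega
    obtain ⟨p, hp⟩ := Finset.card_pos.mp hinter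
    rw [Finset.mem_inter] at hp
    obtain ⟨hp1, hp2⟩ := hp
    simp only [hB', mem_image] at hp2
    obtain ⟨q, hq, hpq⟩ := hp2
    simp only [hA, mem_filter] at hp1 hq
    exact ⟨p, hp1.1, q, hq.1, by rw [← hpq]; abel⟩
  -- distinct-coset counting lemma
  have twoCoset : ∀ c1 ∈ T, ∀ c2 ∈ T, c1 - c2 ∉ H →
      HF.card < (A c1).card + (A c2).card := by
    intro c1 hc1 c2 hc2 hcc
    have hCaSub : ∀ c ∈ T, Ca c ⊆ T + HF := by
      intro c hc y hy
      simp only [hCa, mem_filter, mem_univ, true_and] at hy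
      exact Finset.mem_add.mpr ⟨c, hc, y - c, (memHF _).mpr hy, by abel⟩
    have hTsub : T \ (A c1 ∪ A c2) ⊆ T + HF := by
      intro t ht
      exact Finset.mem_add.mpr ⟨t, (Finset.mem_sdiff.mp ht).1, 0,
        (memHF _).mpr (zero_mem H), add_zero t⟩
    have hd12 : Disjoint (Ca c1) (Ca c2) := by
      rw [Finset.disjoint_left]
      intro y hy1 hy2
      simp only [hCa, mem_filter, mem_univ, true_and] at hy1 hy2
      exact hcc (by have : c1 - c2 = (y - c2) - (y - c1) := by abel
                    rw [this]; exact sub_mem hy2 hy1)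
    have hd3 : Disjoint (Ca c1 ∪ Ca c2) (T \ (A c1 ∪ A c2)) := by
      rw [Finset.disjoint_left]
      intro y hy1 hy2
      rw [Finset.mem_sdiff] at hy2
      rcases Finset.mem_union.mp hy1 with hy | hy <;>
        simp only [hCa, mem_filter, mem_univ, true_and] at hy
      · exact hy2.2 (Finset.mem_union.mpr (Or.inl (by simp [hA, hy2.1, hy])))
      · exact hy2.2 (Finset.mem_union.mpr (Or.inr (by simp [hA, hy2.1, hy])))
    have hbig : (Ca c1 ∪ Ca c2 ∪ (T \ (A c1 ∪ A c2))) ⊆ T + HF :=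
      Finset.union_subset (Finset.union_subset (hCaSub c1 hc1) (hCaSub c2 hc2)) hTsub
    have hcard1 : (Ca c1 ∪ Ca c2 ∪ (T \ (A c1 ∪ A c2))).card
        = HF.card + HF.card + (T \ (A c1 ∪ A c2)).card := by
      rw [Finset.card_union_of_disjoint hd3, Finset.card_union_of_disjoint hd12,
        hCaCard, hCaCard]
    have hAT : A c1 ∪ A c2 ⊆ T :=
      Finset.union_subset (Finset.filter_subset _ _) (Finset.filter_subset _ _)
    have hsd : (T \ (A c1 ∪ A c2)).card = T.card - (A c1 ∪ A c2).card :=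
      Finset.card_sdiff_of_subset hAT
    have h1 : (A c1 ∪ A c2).card ≤ (A c1).card + (A c2).card :=
      Finset.card_union_le _ _
    have h2 : (A c1 ∪ A c2).card ≤ T.card := Finset.card_le_card hAT
    have h3 : (Ca c1 ∪ Ca c2 ∪ (T \ (A c1 ∪ A c2))).card ≤ (T + HF).card :=
      Finset.card_le_card hbig
    omega
  -- symmetry: |A (-c)| = |A c|
  have hAneg : ∀ c : G, c ∈ T → (A (-c)).card = (A c).card := by
    intro c hc
    have : A (-c) = (A c).image (fun t => -t) := by
      ext t
      simp only [hA, mem_filter, mem_image]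
      constructor
      · intro ⟨htT, htH⟩
        refine ⟨-t, ⟨hneg t htT, ?_⟩, neg_neg t⟩
        have h1 : -t - c = -(t - -c) := by abel
        rw [h1]; exact neg_mem htH
      · rintro ⟨u, ⟨huT, huH⟩, rfl⟩
        refine ⟨hneg u huT, ?_⟩
        have h1 : -u - -c = -(u - c) := by abel
        rw [h1]; exact neg_mem huH
    rw [this, Finset.card_image_of_injective _ neg_injective]
  -- same coset gives same A
  have hAeq : ∀ c c' : G, c - c' ∈ H → A c = A c' := by
    intro c c' hcc
    simp only [hA]
    apply Finset.filter_congr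
    intro t _
    constructor
    · intro h
      have : t - c' = (t - c) + (c - c') := by abel
      rw [this]; exact add_mem h hcc
    · intro h
      have : t - c = (t - c') - (c - c') := by abel
      rw [this]; exact sub_mem h hcc
  -- there is c0 ∈ T with c0 ∉ H
  have hc0 : ∃ c0 ∈ T, c0 ∉ H := by
    by_contra hcon
    push_neg at hcon
    have hTop : H = ⊤ := by
      rw [← top_le_iff, ← hgen]
      rw [AddSubgroup.closure_le]
      intro s hs
      exact hcon s (hST (by exact_mod_cast hs))
    have : HF ⊆ T + HF := fun y hy =>
      Finset.mem_add.mpr ⟨0, h0T, y, hy, zero_add y⟩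
    have h1 : HF.card ≤ (T + HF).card := Finset.card_le_card this
    have h2 : HF.card = Fintype.card G := by
      rw [hHF]
      rw [hTop]
      simp [Finset.filter_true_of_mem]
    omega
  -- main inclusion
  have main : ∀ s ∈ T, ∀ s' ∈ T, ∀ h ∈ H, ∃ p ∈ T, ∃ q ∈ T, p + q = s + s' + h := by
    intro s hs s' hs' h hh
    by_cases hss : s + s' ∈ H
    · -- x ∈ H
      have hxH : s + s' + h ∈ H := add_mem hss hh
      obtain ⟨c0, hc0T, hc0H⟩ := hc0
      by_cases h2c : c0 + c0 ∈ H
      · -- compare A 0 and A c0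
        have hkey : HF.card < (A c0).card + (A 0).card := by
          apply twoCoset c0 hc0T 0 h0T
          simpa using hc0H
        rcases le_or_gt (A c0).card (A 0).card with hle | hlt
        · apply fill 0 0 _ (by simpa using hxH)
          omega
        · apply fill c0 c0 _ ?_ (by omega)
          have : s + s' + h - (c0 + c0) ∈ H := sub_mem hxH h2c
          exact this
      · have hkey : HF.card < (A c0).card + (A (-c0)).card := by
          apply twoCoset c0 hc0T (-c0) (hneg c0 hc0T)
          intro hmem
          exact h2c (by simpa [sub_neg_eq_add] using hmem)
        apply fill c0 (-c0) _ ?_ hkey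
        simpa using hxH
    · -- x ∉ H
      by_cases hss' : s - s' ∈ H
      · -- same coset; then 2s ∉ H
        have h2s : s + s ∉ H := by
          intro hmem
          apply hss
          have : s + s' = (s + s) - (s - s') := by abel
          rw [this]; exact sub_mem hmem hss'
        have hkey : HF.card < (A s).card + (A (-s)).card := by
          apply twoCoset s hs (-s) (hneg s hs)
          intro hmem
          exact h2s (by simpa [sub_neg_eq_add] using hmem)
        rw [hAneg s hs] at hkey
        have hcs : (A s').card = (A s).card := by
          rw [hAeq s' s (by simpa using neg_mem hss' : s' - s ∈ H)]
        apply fill s s' _ ?_ (by omega)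
        have : s + s' + h - (s + s') = h := by abel
        rw [this]; exact hh
      · have hkey : HF.card < (A s).card + (A s').card := twoCoset s hs s' hs' hss'
        apply fill s s' _ ?_ hkey
        have : s + s' + h - (s + s') = h := by abel
        rw [this]; exact hh
  -- conclude
  rw [hHset, ← Finset.coe_add T T, ← Finset.coe_add (T + T) HF]
  rw [Finset.coe_inj]
  apply Finset.Subset.antisymm
  · intro x hx
    obtain ⟨y, hy, z, hz, rfl⟩ := Finset.mem_add.mp hx
    obtain ⟨s, hs, s', hs', rfl⟩ := Finset.mem_add.mp hy
    obtain ⟨p, hp, q, hq, hpq⟩ := main s hs s' hs' z ((memHF z).mp hz)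
    exact Finset.mem_add.mpr ⟨p, hp, q, hq, hpq⟩
  · intro x hx
    obtain ⟨y, hy, z, hz, rfl⟩ := Finset.mem_add.mp hx
    exact Finset.mem_add.mpr ⟨y + z, Finset.mem_add.mpr ⟨y, hy, z, hz, rfl⟩,
      0, (memHF 0).mpr (zero_mem H), add_zero _⟩
end
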